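/- arXiv:1911.13187 — 4 statements merged into one kernel-verified Lean document; each statement's English description precedes it below -/
import Mathlib

section
/- For the Q-voter model on [n] with opinions in {0,1} started from the product measure μ_u in which each voter independently has opinion 1 with probability u ∈ (0,1), the expected consensus time satisfies t^{(u)}_cons ≤ t_coal, where t_coal is the expected time for the dual system of coalescing Q-random walks started with one walker at every state to coalesce to a single walker within every irreducible component. If in addition the Markov chain with generator Q is irreducible, then t^{(u)}_cons ≥ 2u(1−u) t_coal for all u ∈ (0,1). -/
open scoped BigOperators Classical
open MeasureTheory Filter

noncomputable section

namespace VoterIRG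

/-! ### Continuous-time Markov chains via their generators -/

/-- `Q` is the generator (`Q`-matrix) of a continuous-time Markov chain on `Fin n`:
nonnegative off-diagonal entries and zero row sums. -/
def IsGenerator {n : ℕ} (Q : Matrix (Fin n) (Fin n) ℝ) : Prop :=
  (∀ i j, i ≠ j → 0 ≤ Q i j) ∧ ∀ i, ∑ j, Q i j = 0

/-- Detailed balance of `Q` with respect to `pi`. -/
def Reversible {n : ℕ} (Q : Matrix (Fin n) (Fin n) ℝ) (pi : Fin n → ℝ) : Prop :=
  ∀ i j, pi i * Q i j = pi j * Q j i

/-- `pi` is a (positive) stationary distribution for the chain with generator `Q`. -/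
def IsStationaryDist {n : ℕ} (Q : Matrix (Fin n) (Fin n) ℝ) (pi : Fin n → ℝ) : Prop :=
  (∀ i, 0 < pi i) ∧ (∑ i, pi i = 1) ∧ ∀ j, ∑ i, pi i * Q i j = 0

/-- `i` and `j` lie in the same irreducible (communicating) component of the chain. -/
def SameComp {n : ℕ} (Q : Matrix (Fin n) (Fin n) ℝ) : Fin n → Fin n → Prop :=
  Relation.ReflTransGen fun a b => a ≠ b ∧ (Q a b ≠ 0 ∨ Q b a ≠ 0)

/-- The chain with generator `Q` is irreducible. -/
def Irreducible {n : ℕ} (Q : Matrix (Fin n) (Fin n) ℝ) : Prop :=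
  ∀ i j, SameComp Q i j

/-- `h` is the vector of expected hitting times of the set `A` for the chain with
generator `Q`, on the (transition-closed) part `D` of the state space: it is the
minimal nonnegative solution on `D` of `h = 0` on `A` and `(Q h)(s) = -1` off `A`. -/
def IsHittingOn {S : Type*} [Fintype S] (Q : Matrix S S ℝ) (D A : Set S) (h : S → ℝ) : Prop :=
  (∀ s ∈ D, 0 ≤ h s) ∧ (∀ s ∈ D ∩ A, h s = 0) ∧
  (∀ s ∈ D, s ∉ A → ∑ t, Q s t * h t = -1) ∧
  ∀ g : S → ℝ, (∀ s ∈ D, 0 ≤ g s) → (∀ s ∈ D ∩ A, g s = 0) →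
    (∀ s ∈ D, s ∉ A → ∑ t, Q s t * g t = -1) → (∀ s ∉ D, g s = h s) →
    ∀ s ∈ D, h s ≤ g s

/-- `h` is the vector of expected hitting times of `A` (whole state space version). -/
def IsHitting {S : Type*} [Fintype S] (Q : Matrix S S ℝ) (A : Set S) (h : S → ℝ) : Prop :=
  IsHittingOn Q Set.univ A h

/-- `h x y = 𝔼ₓ(T_y)`, the expected hitting time of `y` from `x` (defined on the
component of `y`). -/
def IsHitTimeFn {n : ℕ} (Q : Matrix (Fin n) (Fin n) ℝ) (h : Fin n → Fin n → ℝ) : Prop :=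
  ∀ y, IsHittingOn Q {x | SameComp Q x y} {y} fun x => h x y

/-- Generator of two independent copies of the chain (the product chain). -/
def prodGen {n : ℕ} (Q : Matrix (Fin n) (Fin n) ℝ) :
    Matrix (Fin n × Fin n) (Fin n × Fin n) ℝ := fun p q =>
  (if p.2 = q.2 then Q p.1 q.1 else 0) + (if p.1 = q.1 then Q p.2 q.2 else 0)

/-- `m (x, y) = 𝔼_{x,y}(τ_meet)`, the expected meeting time of two independent copies
of the chain started at `x` and `y` (defined for `x, y` in the same component). -/
def IsMeetTimeFn {n : ℕ} (Q : Matrix (Fin n) (Fin n) ℝ) (m : Fin n × Fin n → ℝ) : Prop :=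
  IsHittingOn (prodGen Q) {p | SameComp Q p.1 p.2} {p | p.1 = p.2} m

/-! ### The voter model and the coalescing system -/

/-- Generator of the `Q`-voter model on opinion configurations `Fin n → Bool`:
for `i ≠ j`, at rate `Q i j` the opinion at `i` is replaced by the opinion at `j`. -/
def voterGen {n : ℕ} (Q : Matrix (Fin n) (Fin n) ℝ) :
    Matrix (Fin n → Bool) (Fin n → Bool) ℝ := fun η ξ =>
  if η = ξ then
    -∑ i, ∑ j, (if i ≠ j ∧ Function.update η i (η j) ≠ η then Q i j else 0)
  else
    ∑ i, ∑ j, (if i ≠ j ∧ Function.update η i (η j) = ξ then Q i j else 0)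

/-- Configurations which are constant on every irreducible component. -/
def ConsensusSet {n : ℕ} (Q : Matrix (Fin n) (Fin n) ℝ) : Set (Fin n → Bool) :=
  {η | ∀ i j, SameComp Q i j → η i = η j}

/-- The product Bernoulli(u) weight of a configuration `η`. -/
def bernWeight {n : ℕ} (u : ℝ) (η : Fin n → Bool) : ℝ :=
  ∏ i, if η i then u else 1 - u

/-- `T = 𝔼_{μ_u}(τ_cons)`: the expected consensus time of the `Q`-voter model started
from i.i.d. Bernoulli(u) opinions, expressed through the expected-hitting-time vector
of the consensus configurations. -/
def IsExpConsensusTime {n : ℕ} (Q : Matrix (Fin n) (Fin n) ℝ) (u T : ℝ) : Prop :=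
  ∃ h : (Fin n → Bool) → ℝ,
    IsHitting (voterGen Q) (ConsensusSet Q) h ∧ T = ∑ η, bernWeight u η * h η

/-- Generator of the system of coalescing `Q`-random walks, recorded through the set of
occupied sites: the walker at `x` jumps to `y` at rate `Q x y`, and walkers coalesce
upon meeting. -/
def coalGen {n : ℕ} (Q : Matrix (Fin n) (Fin n) ℝ) :
    Matrix (Finset (Fin n)) (Finset (Fin n)) ℝ := fun S T =>
  if S = T then
    -∑ x ∈ S, ∑ y, (if x ≠ y ∧ insert y (S.erase x) ≠ S then Q x y else 0)
  else
    ∑ x ∈ S, ∑ y, (if x ≠ y ∧ insert y (S.erase x) = T then Q x y else 0)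

/-- Occupied-site sets in which all walkers within any single irreducible component
have coalesced into one walker. -/
def CoalescedSet {n : ℕ} (Q : Matrix (Fin n) (Fin n) ℝ) : Set (Finset (Fin n)) :=
  {S | ∀ x ∈ S, ∀ y ∈ S, SameComp Q x y → x = y}

/-- `T = t_coal = 𝔼_{[n]}(max_j τ_coal(C_j))`: the expected time for the coalescing
system started with one walker at every state to coalesce completely within every
irreducible component. -/
def IsExpCoalTime {n : ℕ} (Q : Matrix (Fin n) (Fin n) ℝ) (T : ℝ) : Prop :=
  ∃ g : Finset (Fin n) → ℝ,
    IsHitting (coalGen Q) (CoalescedSet Q) g ∧ T = g Finset.univ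

/-! ### Transition semigroup, mixing and relaxation times -/

/-- The transition semigroup `P_t = e^{tQ}` of the chain. -/
def transSemigroup {n : ℕ} (Q : Matrix (Fin n) (Fin n) ℝ) (t : ℝ) :
    Matrix (Fin n) (Fin n) ℝ :=
  NormedSpace.exp (t • Q)

/-- Worst-case total variation distance from stationarity at time `t`. -/
def tvDist {n : ℕ} (Q : Matrix (Fin n) (Fin n) ℝ) (pi : Fin n → ℝ) (t : ℝ) : ℝ :=
  (1 / 2) * ⨆ x : Fin n, ∑ j, |transSemigroup Q t x j - pi j|

/-- The mixing time `t_mix = min{t ≥ 0 : d(t) ≤ 1/4}`. -/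
def mixingTime {n : ℕ} (Q : Matrix (Fin n) (Fin n) ℝ) (pi : Fin n → ℝ) : ℝ :=
  sInf {t : ℝ | 0 ≤ t ∧ tvDist Q pi t ≤ 1 / 4}

/-- The mixing time from the state `i`. -/
def mixingTimeFrom {n : ℕ} (Q : Matrix (Fin n) (Fin n) ℝ) (pi : Fin n → ℝ) (i : Fin n) : ℝ :=
  sInf {t : ℝ | 0 ≤ t ∧ ∑ j, |transSemigroup Q t i j - pi j| ≤ 1 / 2}

/-- The relaxation time `t_rel = max{1/λ : λ a positive eigenvalue of -Q}`. -/
def relaxTime {n : ℕ} (Q : Matrix (Fin n) (Fin n) ℝ) : ℝ :=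
  sSup {r : ℝ | ∃ lam : ℝ, 0 < lam ∧ r = 1 / lam ∧
    ∃ v : Fin n → ℝ, v ≠ 0 ∧ (-Q).mulVec v = lam • v}


/-! ### Auxiliary machinery for the proof -/

section RowAct

variable {σ τ : Type*} [Fintype σ] [DecidableEq σ] [Fintype τ]

private lemma rowact (f : τ → ℝ) (mv : τ → σ) (s : σ) (G : σ → ℝ) :
    ∑ s' : σ, (if s = s' then -(∑ t, if mv t ≠ s then f t else 0)
        else ∑ t, if mv t = s' then f t else 0) * G s'
      = ∑ t, f t * (G (mv t) - G s) := by
  classical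
  rw [← Finset.add_sum_erase _ _ (Finset.mem_univ s), if_pos rfl]
  have h2 : ∑ s' ∈ Finset.univ.erase s,
      (if s = s' then -(∑ t, if mv t ≠ s then f t else 0)
        else ∑ t, if mv t = s' then f t else 0) * G s'
      = ∑ t, if mv t ≠ s then f t * G (mv t) else 0 := by
    have step1 : ∀ s' ∈ Finset.univ.erase s,
        (if s = s' then -(∑ t, if mv t ≠ s then f t else 0)
          else ∑ t, if mv t = s' then f t else 0) * G s'
        = ∑ t, (if mv t = s' then f t * G s' else 0) := by
      intro s' hs'
      rw [if_neg (Finset.ne_of_mem_erase hs').symm, Finset.sum_mul]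
      exact Finset.sum_congr rfl fun t _ => by rw [ite_mul, zero_mul]
    rw [Finset.sum_congr rfl step1, Finset.sum_comm]
    refine Finset.sum_congr rfl fun t _ => ?_
    rw [Finset.sum_ite_eq]
    simp [Finset.mem_erase]
  rw [h2, neg_mul, ← sub_eq_neg_add, Finset.sum_mul, ← Finset.sum_sub_distrib]
  refine Finset.sum_congr rfl fun t _ => ?_
  by_cases h : mv t = s
  · rw [if_neg (not_not.2 h), if_neg (not_not.2 h), h]; ring
  · rw [if_pos h, if_pos h]; ring

private lemma maxPrinciple {σ : Type*} [Fintype σ] (L : Matrix σ σ ℝ)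
    (hoff : ∀ a b, a ≠ b → 0 ≤ L a b) (hrow : ∀ a, ∑ b, L a b = 0)
    (A : Set σ)
    (hreach : ∀ s, ∃ t ∈ A, Relation.ReflTransGen (fun a b => a ≠ b ∧ L a b ≠ 0) s t)
    (w : σ → ℝ) (hA : ∀ s ∈ A, 0 ≤ w s)
    (hsup : ∀ s, s ∉ A → ∑ t, L s t * w t ≤ 0) :
    ∀ s, 0 ≤ w s := by
  by_contra hcon
  push_neg at hcon
  obtain ⟨sbad, hsbad⟩ := hcon
  have hne : (Finset.univ : Finset σ).Nonempty := ⟨sbad, Finset.mem_univ _⟩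
  obtain ⟨s₀, -, hmin⟩ := Finset.exists_min_image Finset.univ w hne
  have hcneg : w s₀ < 0 := lt_of_le_of_lt (hmin sbad (Finset.mem_univ _)) hsbad
  have hminle : ∀ t, w s₀ ≤ w t := fun t => hmin t (Finset.mem_univ _)
  have prop : ∀ s, w s = w s₀ → ∀ t, s ≠ t → L s t ≠ 0 → w t = w s₀ := by
    intro s hs t hst hLst
    have hsA : s ∉ A := by
      intro hmem
      have := hA s hmem
      rw [hs] at this
      exact absurd this (not_le.2 hcneg)
    have h1 : ∑ t', L s t' * (w t' - w s₀) ≤ 0 := by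
      have h2 : ∑ t', L s t' * w s₀ = 0 := by
        rw [← Finset.sum_mul, hrow, zero_mul]
      have h3 := hsup s hsA
      have h4 : ∑ t', L s t' * (w t' - w s₀)
          = (∑ t', L s t' * w t') - ∑ t', L s t' * w s₀ := by
        rw [← Finset.sum_sub_distrib]
        exact Finset.sum_congr rfl fun _ _ => by ring
      rw [h4, h2, sub_zero]
      exact h3
    have hnn : ∀ t' ∈ Finset.univ, 0 ≤ L s t' * (w t' - w s₀) := by
      intro t' _
      rcases eq_or_ne s t' with rfl | hne'
      · rw [hs]; simp
      · exact mul_nonneg (hoff _ _ hne') (sub_nonneg.2 (hminle t'))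
    have hsum0 : ∑ t' : σ, L s t' * (w t' - w s₀) = 0 :=
      le_antisymm h1 (Finset.sum_nonneg hnn)
    have hz := (Finset.sum_eq_zero_iff_of_nonneg hnn).1 hsum0 t (Finset.mem_univ t)
    rcases mul_eq_zero.1 hz with h | h
    · exact absurd h hLst
    · linarith [sub_eq_zero.1 h]
  obtain ⟨t, htA, hpath⟩ := hreach s₀
  have hall : ∀ x, Relation.ReflTransGen (fun a b => a ≠ b ∧ L a b ≠ 0) s₀ x → w x = w s₀ := by
    intro x hx
    induction hx with
    | refl => rfl
    | tail hab hbc ih => exact prop _ ih _ hbc.1 hbc.2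
  have h5 := hall t hpath
  have h6 := hA t htA
  rw [h5] at h6
  exact absurd h6 (not_le.2 hcneg)

private lemma harmonicZero {σ : Type*} [Fintype σ] (L : Matrix σ σ ℝ)
    (hoff : ∀ a b, a ≠ b → 0 ≤ L a b) (hrow : ∀ a, ∑ b, L a b = 0)
    (A : Set σ)
    (hreach : ∀ s, ∃ t ∈ A, Relation.ReflTransGen (fun a b => a ≠ b ∧ L a b ≠ 0) s t)
    (x : σ → ℝ) (hxA : ∀ s ∈ A, x s = 0) (hxh : ∀ s, s ∉ A → ∑ t, L s t * x t = 0) :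
    ∀ s, x s = 0 := by
  intro s
  have h1 := maxPrinciple L hoff hrow A hreach x (fun s hs => (hxA s hs).ge)
    (fun s hs => (hxh s hs).le) s
  have h2 := maxPrinciple L hoff hrow A hreach (fun t => -x t)
    (fun s hs => by simp [hxA s hs])
    (fun s hs => by
      have h3 : ∑ t, L s t * (-x t) = -∑ t, L s t * x t := by
        rw [← Finset.sum_neg_distrib]
        exact Finset.sum_congr rfl fun _ _ => by ring
      rw [h3, hxh s hs, neg_zero]) s
  simp only [Left.nonneg_neg_iff] at h2
  exact le_antisymm h2 h1

private lemma boundary {α : Type*} {r : α → α → Prop} {P : α → Prop} {x y : α}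
    (h : Relation.ReflTransGen r x y) (hx : P x) (hy : ¬P y) :
    ∃ u v, r u v ∧ Relation.ReflTransGen r x u ∧ P u ∧ ¬P v := by
  revert hy
  induction h with
  | refl => exact fun hy => absurd hx hy
  | @tail b c hab e ih =>
    intro hy
    by_cases hb : P b
    · exact ⟨b, c, e, hab, hb, hy⟩
    · obtain ⟨u, v, he, hp, h1, h2⟩ := ih hb
      exact ⟨u, v, he, hp, h1, h2⟩

private lemma sum_subtype_of_vanish {σ : Type*} [Fintype σ] (p : σ → Prop)
    [DecidablePred p] [Fintype (Subtype p)]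
    (F : σ → ℝ) (hF : ∀ s, ¬ p s → F s = 0) :
    ∑ s : σ, F s = ∑ a : Subtype p, F a.1 := by
  rw [← Finset.sum_filter_of_ne (p := p) (fun s _ h => by
    by_contra hp; exact h (hF s hp))]
  exact Finset.sum_subtype _ (by simp) _

end RowAct
section Bern

variable {n : ℕ}

private lemma sum_prod_bool (w : Fin n → Bool → ℝ) :
    ∑ η : Fin n → Bool, ∏ i, w i (η i) = ∏ i, (w i true + w i false) := by
  classical
  have h := Finset.prod_univ_sum (fun _ : Fin n => (Finset.univ : Finset Bool)) w
  rw [Fintype.piFinset_univ] at h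
  rw [← h]
  exact Finset.prod_congr rfl fun i _ => by rw [Fintype.sum_bool]

private lemma prod_ite_pairf {x y : Fin n} (hxy : x ≠ y) (F : Fin n → ℝ) :
    ∏ i : Fin n, (if i = x ∨ i = y then F i else 1) = F x * F y := by
  classical
  rw [← Finset.prod_subset (Finset.subset_univ ({x, y} : Finset (Fin n)))
      (fun i _ hi => by
        simp only [Finset.mem_insert, Finset.mem_singleton] at hi
        push_neg at hi
        rw [if_neg (by tauto)])]
  rw [show ({x, y} : Finset (Fin n)) = insert x {y} from rfl,
    Finset.prod_insert (by simp [hxy]), Finset.prod_singleton,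
    if_pos (Or.inl rfl), if_pos (Or.inr rfl)]

private lemma bern_nonneg {u : ℝ} (hu0 : 0 < u) (hu1 : u < 1) (η : Fin n → Bool) :
    0 ≤ bernWeight u η := by
  refine Finset.prod_nonneg fun i _ => ?_
  split_ifs
  · exact hu0.le
  · linarith

private lemma bern_sum (u : ℝ) : ∑ η : Fin n → Bool, bernWeight u η = 1 := by
  have h := sum_prod_bool (fun _ : Fin n => fun b => if b then u else 1 - u)
  simp only [if_true, if_false] at h
  unfold bernWeight
  rw [h]
  norm_num

private lemma bern_two (u : ℝ) {x y : Fin n} (hxy : x ≠ y) (c : Bool → ℝ) :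
    ∑ η : Fin n → Bool, bernWeight u η * (c (η x) * c (η y))
      = (u * c true + (1 - u) * c false) * (u * c true + (1 - u) * c false) := by
  classical
  have key : ∀ η : Fin n → Bool, bernWeight u η * (c (η x) * c (η y))
      = ∏ i, ((if η i then u else 1 - u) * (if i = x ∨ i = y then c (η i) else 1)) := by
    intro η
    rw [Finset.prod_mul_distrib, prod_ite_pairf hxy (fun i => c (η i))]
    rfl
  rw [Finset.sum_congr rfl fun η _ => key η]
  have h := sum_prod_bool (fun i : Fin n => fun b =>
    (if b then u else 1 - u) * (if i = x ∨ i = y then c b else 1))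
  rw [h]
  have h2 : ∀ i : Fin n,
      ((if (true : Bool) then u else 1 - u) * (if i = x ∨ i = y then c true else 1)
        + (if (false : Bool) then u else 1 - u) * (if i = x ∨ i = y then c false else 1))
      = (if i = x ∨ i = y then u * c true + (1 - u) * c false else 1) := by
    intro i
    by_cases hi : i = x ∨ i = y
    · rw [if_pos hi, if_pos hi, if_pos hi]; norm_num
    · rw [if_neg hi, if_neg hi, if_neg hi]; simp
  rw [Finset.prod_congr rfl fun i _ => h2 i, prod_ite_pairf hxy]

private lemma bern_pair (u : ℝ) {x y : Fin n} (hxy : x ≠ y) :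
    ∑ η : Fin n → Bool, bernWeight u η * (if η x = η y then 1 else 0)
      = u * u + (1 - u) * (1 - u) := by
  classical
  have key : ∀ η : Fin n → Bool, bernWeight u η * (if η x = η y then (1 : ℝ) else 0)
      = bernWeight u η * ((fun b => if b then (1:ℝ) else 0) (η x) * (fun b => if b then (1:ℝ) else 0) (η y))
        + bernWeight u η * ((fun b => if b then (0:ℝ) else 1) (η x) * (fun b => if b then (0:ℝ) else 1) (η y)) := by
    intro η
    cases hx : η x <;> cases hy : η y <;> simp [hx, hy]
  rw [Finset.sum_congr rfl fun η _ => key η, Finset.sum_add_distrib,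
    bern_two u hxy (fun b => if b then (1:ℝ) else 0),
    bern_two u hxy (fun b => if b then (0:ℝ) else 1)]
  norm_num

end Bern
section CompLemmas

variable {n : ℕ} {Q : Matrix (Fin n) (Fin n) ℝ} {pi : Fin n → ℝ}

private lemma sameComp_symm {i j : Fin n} (h : SameComp Q i j) : SameComp Q j i := by
  induction h with
  | refl => exact Relation.ReflTransGen.refl
  | tail hab e ih => exact Relation.ReflTransGen.head ⟨e.1.symm, e.2.symm⟩ ih

private lemma Qsymm_ne (hrev : Reversible Q pi) (hpos : ∀ i, 0 < pi i) {i j : Fin n}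
    (h : Q i j ≠ 0) : Q j i ≠ 0 := by
  intro h0
  have h1 := hrev i j
  rw [h0, mul_zero] at h1
  exact h ((mul_eq_zero.1 h1).resolve_left (ne_of_gt (hpos i)))

private lemma edge_ne (hrev : Reversible Q pi) (hpos : ∀ i, 0 < pi i) {i j : Fin n}
    (h : Q i j ≠ 0 ∨ Q j i ≠ 0) : Q i j ≠ 0 :=
  h.elim id (fun h' => Qsymm_ne hrev hpos h')

private lemma edge_pos (hQ : IsGenerator Q) {i j : Fin n} (hij : i ≠ j) (h : Q i j ≠ 0) :
    0 < Q i j :=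
  lt_of_le_of_ne (hQ.1 i j hij) (Ne.symm h)

private noncomputable def rep (Q : Matrix (Fin n) (Fin n) ℝ) (i : Fin n) : Fin n :=
  (Finset.univ.filter fun j => SameComp Q i j).min'
    ⟨i, Finset.mem_filter.2 ⟨Finset.mem_univ i, Relation.ReflTransGen.refl⟩⟩

private lemma rep_mem (i : Fin n) : SameComp Q i (rep Q i) := by
  have h := Finset.min'_mem (Finset.univ.filter fun j => SameComp Q i j)
    ⟨i, Finset.mem_filter.2 ⟨Finset.mem_univ i, Relation.ReflTransGen.refl⟩⟩
  exact (Finset.mem_filter.1 h).2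

private lemma rep_eq_of {i j : Fin n} (h : SameComp Q i j) : rep Q i = rep Q j := by
  have hset : (Finset.univ.filter fun x => SameComp Q i x)
      = (Finset.univ.filter fun x => SameComp Q j x) := by
    apply Finset.ext
    intro x
    simp only [Finset.mem_filter, Finset.mem_univ, true_and]
    exact ⟨fun hx => (sameComp_symm h).trans hx, fun hx => h.trans hx⟩
  have key : ∀ (A B : Finset (Fin n)) (hA : A.Nonempty) (hB : B.Nonempty),
      A = B → A.min' hA = B.min' hB := by
    rintro A B hA hB rfl; rfl
  exact key _ _ _ _ hset

private lemma rep_idem (i : Fin n) : rep Q (rep Q i) = rep Q i :=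
  (rep_eq_of (rep_mem i)).symm

end CompLemmas

section GenForm

variable {n : ℕ}

private def vf (Q : Matrix (Fin n) (Fin n) ℝ) : Fin n × Fin n → ℝ :=
  fun p => if p.1 ≠ p.2 then Q p.1 p.2 else 0

private def vmv (η : Fin n → Bool) : Fin n × Fin n → (Fin n → Bool) :=
  fun p => Function.update η p.1 (η p.2)

private def cf (Q : Matrix (Fin n) (Fin n) ℝ) (S : Finset (Fin n)) : Fin n × Fin n → ℝ :=
  fun p => if p.1 ∈ S ∧ p.1 ≠ p.2 then Q p.1 p.2 else 0

private def cmv (S : Finset (Fin n)) : Fin n × Fin n → Finset (Fin n) :=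
  fun p => insert p.2 (S.erase p.1)

private lemma voterGen_eq (Q : Matrix (Fin n) (Fin n) ℝ) (η ξ : Fin n → Bool) :
    voterGen Q η ξ
      = if η = ξ then -(∑ p : Fin n × Fin n, if vmv η p ≠ η then vf Q p else 0)
        else ∑ p : Fin n × Fin n, if vmv η p = ξ then vf Q p else 0 := by
  unfold voterGen
  by_cases h : η = ξ
  · rw [if_pos h, if_pos h, Fintype.sum_prod_type]
    congr 1
    refine Finset.sum_congr rfl fun i _ => Finset.sum_congr rfl fun j _ => ?_
    unfold vf vmv
    split_ifs <;> tauto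
  · rw [if_neg h, if_neg h, Fintype.sum_prod_type]
    refine Finset.sum_congr rfl fun i _ => Finset.sum_congr rfl fun j _ => ?_
    unfold vf vmv
    split_ifs <;> tauto

private lemma coalGen_eq (Q : Matrix (Fin n) (Fin n) ℝ) (S T : Finset (Fin n)) :
    coalGen Q S T
      = if S = T then -(∑ p : Fin n × Fin n, if cmv S p ≠ S then cf Q S p else 0)
        else ∑ p : Fin n × Fin n, if cmv S p = T then cf Q S p else 0 := by
  unfold coalGen
  by_cases h : S = T
  · rw [if_pos h, if_pos h, Fintype.sum_prod_type]
    congr 1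
    have h1 : ∀ x : Fin n,
        (∑ y, if cmv S (x, y) ≠ S then cf Q S (x, y) else 0)
          = if x ∈ S then ∑ y, (if x ≠ y ∧ insert y (S.erase x) ≠ S then Q x y else 0)
            else 0 := by
      intro x
      by_cases hx : x ∈ S
      · rw [if_pos hx]
        refine Finset.sum_congr rfl fun y _ => ?_
        unfold cf cmv
        split_ifs <;> tauto
      · rw [if_neg hx]
        refine Finset.sum_eq_zero fun y _ => ?_
        unfold cf cmv
        split_ifs <;> tauto
    rw [Finset.sum_congr rfl fun x _ => h1 x, Finset.sum_ite_mem, Finset.univ_inter]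
  · rw [if_neg h, if_neg h, Fintype.sum_prod_type]
    have h1 : ∀ x : Fin n,
        (∑ y, if cmv S (x, y) = T then cf Q S (x, y) else 0)
          = if x ∈ S then ∑ y, (if x ≠ y ∧ insert y (S.erase x) = T then Q x y else 0)
            else 0 := by
      intro x
      by_cases hx : x ∈ S
      · rw [if_pos hx]
        refine Finset.sum_congr rfl fun y _ => ?_
        unfold cf cmv
        split_ifs <;> tauto
      · rw [if_neg hx]
        refine Finset.sum_eq_zero fun y _ => ?_
        unfold cf cmv
        split_ifs <;> tauto
    rw [Finset.sum_congr rfl fun x _ => h1 x, Finset.sum_ite_mem, Finset.univ_inter]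

private lemma voter_row (Q : Matrix (Fin n) (Fin n) ℝ) (η : Fin n → Bool)
    (G : (Fin n → Bool) → ℝ) :
    ∑ ξ, voterGen Q η ξ * G ξ = ∑ p : Fin n × Fin n, vf Q p * (G (vmv η p) - G η) := by
  rw [Finset.sum_congr rfl fun ξ _ => by rw [voterGen_eq Q η ξ]]
  exact rowact (vf Q) (vmv η) η G

private lemma coal_row (Q : Matrix (Fin n) (Fin n) ℝ) (S : Finset (Fin n))
    (G : Finset (Fin n) → ℝ) :
    ∑ T, coalGen Q S T * G T = ∑ p : Fin n × Fin n, cf Q S p * (G (cmv S p) - G S) := by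
  rw [Finset.sum_congr rfl fun T _ => by rw [coalGen_eq Q S T]]
  exact rowact (cf Q S) (cmv S) S G

private lemma voter_rowsum (Q : Matrix (Fin n) (Fin n) ℝ) (η : Fin n → Bool) :
    ∑ ξ, voterGen Q η ξ = 0 := by
  have h := voter_row Q η (fun _ => (1 : ℝ))
  simpa using h

private lemma coal_rowsum (Q : Matrix (Fin n) (Fin n) ℝ) (S : Finset (Fin n)) :
    ∑ T, coalGen Q S T = 0 := by
  have h := coal_row Q S (fun _ => (1 : ℝ))
  simpa using h

private lemma voter_offdiag {Q : Matrix (Fin n) (Fin n) ℝ} (hQ : IsGenerator Q)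
    {η ξ : Fin n → Bool} (h : η ≠ ξ) : 0 ≤ voterGen Q η ξ := by
  rw [voterGen, if_neg h]
  refine Finset.sum_nonneg fun i _ => Finset.sum_nonneg fun j _ => ?_
  split_ifs with hc
  · exact hQ.1 i j hc.1
  · rfl

private lemma coal_offdiag {Q : Matrix (Fin n) (Fin n) ℝ} (hQ : IsGenerator Q)
    {S T : Finset (Fin n)} (h : S ≠ T) : 0 ≤ coalGen Q S T := by
  rw [coalGen, if_neg h]
  refine Finset.sum_nonneg fun x _ => Finset.sum_nonneg fun y _ => ?_
  split_ifs with hc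
  · exact hQ.1 x y hc.1
  · rfl

private lemma voterGen_pos {Q : Matrix (Fin n) (Fin n) ℝ} (hQ : IsGenerator Q)
    {η ξ : Fin n → Bool} {a b : Fin n} (hab : a ≠ b) (hQab : 0 < Q a b)
    (hupd : Function.update η a (η b) = ξ) (hne : η ≠ ξ) :
    0 < voterGen Q η ξ := by
  rw [voterGen, if_neg hne]
  have hnn : ∀ i : Fin n, ∀ j : Fin n,
      0 ≤ (if i ≠ j ∧ Function.update η i (η j) = ξ then Q i j else 0) := by
    intro i j
    split_ifs with hc
    · exact hQ.1 i j hc.1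
    · rfl
  refine Finset.sum_pos' (fun i _ => Finset.sum_nonneg fun j _ => hnn i j)
    ⟨a, Finset.mem_univ a, Finset.sum_pos' (fun j _ => hnn a j)
      ⟨b, Finset.mem_univ b, ?_⟩⟩
  rw [if_pos ⟨hab, hupd⟩]
  exact hQab

private lemma coalGen_pos {Q : Matrix (Fin n) (Fin n) ℝ} (hQ : IsGenerator Q)
    {S T : Finset (Fin n)} {x y : Fin n} (hxS : x ∈ S) (hxy : x ≠ y) (hQxy : 0 < Q x y)
    (hT : insert y (S.erase x) = T) (hST : S ≠ T) :
    0 < coalGen Q S T := by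
  rw [coalGen, if_neg hST]
  have hnn : ∀ i : Fin n, ∀ j : Fin n,
      0 ≤ (if i ≠ j ∧ insert j (S.erase i) = T then Q i j else 0) := by
    intro i j
    split_ifs with hc
    · exact hQ.1 i j hc.1
    · rfl
  refine Finset.sum_pos' (fun i _ => Finset.sum_nonneg fun j _ => hnn i j)
    ⟨x, hxS, Finset.sum_pos' (fun j _ => hnn x j) ⟨y, Finset.mem_univ y, ?_⟩⟩
  rw [if_pos ⟨hxy, hT⟩]
  exact hQxy

end GenForm
section Duality

variable {n : ℕ}

/-- The duality function: indicator that `η` is constant on each component-intersection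
of `S`. -/
private def Dm (Q : Matrix (Fin n) (Fin n) ℝ) (η : Fin n → Bool) (S : Finset (Fin n)) : ℝ :=
  if ∀ x ∈ S, ∀ y ∈ S, SameComp Q x y → η x = η y then 1 else 0

private lemma Dm_nonneg {Q : Matrix (Fin n) (Fin n) ℝ} (η : Fin n → Bool)
    (S : Finset (Fin n)) : 0 ≤ Dm Q η S := by
  unfold Dm; split_ifs <;> norm_num

private lemma Dm_le_one {Q : Matrix (Fin n) (Fin n) ℝ} (η : Fin n → Bool)
    (S : Finset (Fin n)) : Dm Q η S ≤ 1 := by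
  unfold Dm; split_ifs <;> norm_num

private lemma Dm_coal {Q : Matrix (Fin n) (Fin n) ℝ} {S : Finset (Fin n)}
    (hS : S ∈ CoalescedSet Q) (η : Fin n → Bool) : Dm Q η S = 1 := by
  unfold Dm
  rw [if_pos]
  intro x hx y hy hxy
  rw [hS x hx y hy hxy]

private lemma Dm_cons {Q : Matrix (Fin n) (Fin n) ℝ} {η : Fin n → Bool}
    (hη : η ∈ ConsensusSet Q) (S : Finset (Fin n)) : Dm Q η S = 1 := by
  unfold Dm
  rw [if_pos]
  intro x _ y _ hxy
  exact hη x y hxy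

private lemma Dm_univ_zero {Q : Matrix (Fin n) (Fin n) ℝ} {η : Fin n → Bool}
    (hη : η ∉ ConsensusSet Q) : Dm Q η Finset.univ = 0 := by
  unfold Dm
  rw [if_neg]
  intro hc
  exact hη fun i j hij => hc i (Finset.mem_univ i) j (Finset.mem_univ j) hij

private lemma Dm_congr {Q : Matrix (Fin n) (Fin n) ℝ} {η₁ η₂ : Fin n → Bool}
    {S : Finset (Fin n)} (h : ∀ x ∈ S, η₁ x = η₂ x) : Dm Q η₁ S = Dm Q η₂ S := by
  unfold Dm
  have hiff : (∀ x ∈ S, ∀ y ∈ S, SameComp Q x y → η₁ x = η₁ y)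
      ↔ (∀ x ∈ S, ∀ y ∈ S, SameComp Q x y → η₂ x = η₂ y) := by
    constructor
    · intro H x hx y hy hxy
      rw [← h x hx, ← h y hy]; exact H x hx y hy hxy
    · intro H x hx y hy hxy
      rw [h x hx, h y hy]; exact H x hx y hy hxy
  split_ifs with h1 h2 <;> first | rfl | exact absurd (hiff.1 h1) h2 | exact absurd (hiff.2 ‹_›) h1

private lemma Dm_le_pair {Q : Matrix (Fin n) (Fin n) ℝ} {S : Finset (Fin n)} {x y : Fin n}
    (hx : x ∈ S) (hy : y ∈ S) (hsc : SameComp Q x y) (η : Fin n → Bool) :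
    Dm Q η S ≤ (if η x = η y then 1 else 0) := by
  unfold Dm
  split_ifs with h1 h2
  · exact le_refl 1
  · exact absurd (h1 x hx y hy hsc) h2
  · norm_num
  · exact le_refl 0

/-- Key pointwise duality: updating the opinion at `i` from `j` corresponds to moving the
dual walker from `i` to `j`. -/
private lemma Dm_update {Q : Matrix (Fin n) (Fin n) ℝ} {i j : Fin n} (hij : i ≠ j)
    (hsc : SameComp Q i j) (η : Fin n → Bool) (S : Finset (Fin n)) (hiS : i ∈ S) :
    Dm Q (Function.update η i (η j)) S = Dm Q η (insert j (S.erase i)) := by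
  unfold Dm
  have hiff : (∀ x ∈ S, ∀ y ∈ S, SameComp Q x y →
        Function.update η i (η j) x = Function.update η i (η j) y)
      ↔ (∀ x ∈ insert j (S.erase i), ∀ y ∈ insert j (S.erase i), SameComp Q x y → η x = η y) := by
    constructor
    · intro H x hx y hy hxy
      have pmap : ∀ z ∈ insert j (S.erase i),
          ∃ z', z' ∈ S ∧ η z = Function.update η i (η j) z' ∧ SameComp Q z' z := by
        intro z hz
        rcases Finset.mem_insert.1 hz with hzj | hz'
        · refine ⟨i, hiS, ?_, ?_⟩
          · rw [hzj]; exact (Function.update_self i (η j) η).symm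
          · rw [hzj]; exact hsc
        · obtain ⟨hzi, hzS⟩ := Finset.mem_erase.1 hz'
          exact ⟨z, hzS, (Function.update_of_ne hzi _ _).symm, Relation.ReflTransGen.refl⟩
      obtain ⟨x', hx'S, hxval, hxsc⟩ := pmap x hx
      obtain ⟨y', hy'S, hyval, hysc⟩ := pmap y hy
      rw [hxval, hyval]
      exact H x' hx'S y' hy'S ((hxsc.trans hxy).trans (sameComp_symm hysc))
    · intro H x hx y hy hxy
      have rmap : ∀ z ∈ S, ∃ z', z' ∈ insert j (S.erase i) ∧
          Function.update η i (η j) z = η z' ∧ SameComp Q z z' := by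
        intro z hz
        by_cases hzi : z = i
        · refine ⟨j, Finset.mem_insert_self j _, ?_, ?_⟩
          · rw [hzi]; exact Function.update_self i (η j) η
          · rw [hzi]; exact hsc
        · exact ⟨z, Finset.mem_insert_of_mem (Finset.mem_erase.2 ⟨hzi, hz⟩),
            Function.update_of_ne hzi _ _, Relation.ReflTransGen.refl⟩
      obtain ⟨x', hx'S, hxval, hxsc⟩ := rmap x hx
      obtain ⟨y', hy'S, hyval, hysc⟩ := rmap y hy
      rw [hxval, hyval]
      exact H x' hx'S y' hy'S ((sameComp_symm hxsc).trans (hxy.trans hysc))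
  split_ifs with h1 h2 <;>
    first | rfl | exact absurd (hiff.1 h1) h2 | exact absurd (hiff.2 ‹_›) h1

/-- Generator-level duality between the voter model and the coalescing random walks. -/
private lemma duality_row {Q : Matrix (Fin n) (Fin n) ℝ}
    (η : Fin n → Bool) (S : Finset (Fin n)) :
    ∑ ξ, voterGen Q η ξ * Dm Q ξ S = ∑ T, coalGen Q S T * Dm Q η T := by
  rw [voter_row Q η (fun ξ => Dm Q ξ S), coal_row Q S (fun T => Dm Q η T)]
  refine Finset.sum_congr rfl fun p _ => ?_
  obtain ⟨i, j⟩ := p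
  by_cases hij : i = j
  · simp [vf, cf, hij]
  by_cases hQij : Q i j = 0
  · simp [vf, cf, hij, hQij]
  by_cases hiS : i ∈ S
  · have hDs : Dm Q (vmv η (i, j)) S = Dm Q η (cmv S (i, j)) :=
      Dm_update hij (Relation.ReflTransGen.single ⟨hij, Or.inl hQij⟩) η S hiS
    simp only [vf, cf, vmv, cmv] at *
    rw [hDs, if_pos hij, if_pos ⟨hiS, hij⟩]
  · have hDs : Dm Q (vmv η (i, j)) S = Dm Q η S := by
      refine Dm_congr fun x hx => ?_
      have hxi : x ≠ i := fun h => hiS (h ▸ hx)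
      exact Function.update_of_ne hxi _ _
    simp only [vf, cf, vmv, cmv] at *
    rw [hDs]
    rw [if_pos hij, if_neg (fun hc => hiS hc.1)]
    ring

end Duality
section Reach

variable {n : ℕ} {Q : Matrix (Fin n) (Fin n) ℝ} {pi : Fin n → ℝ}

/-- From any opinion configuration, the voter model can reach a consensus configuration. -/
private lemma voter_reach (hQ : IsGenerator Q) (hrev : Reversible Q pi)
    (hpos : ∀ i, 0 < pi i) (η : Fin n → Bool) :
    ∃ ξ ∈ ConsensusSet Q,
      Relation.ReflTransGen (fun a b => a ≠ b ∧ voterGen Q a b ≠ 0) η ξ := by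
  suffices H : ∀ (N : ℕ) (η : Fin n → Bool),
      (Finset.univ.filter fun i => η i ≠ η (rep Q i)).card = N →
      ∃ ξ ∈ ConsensusSet Q,
        Relation.ReflTransGen (fun a b => a ≠ b ∧ voterGen Q a b ≠ 0) η ξ by
    exact H _ η rfl
  intro N
  induction N using Nat.strong_induction_on with
  | _ N ih =>
    intro η hN
    by_cases hcons : η ∈ ConsensusSet Q
    · exact ⟨η, hcons, Relation.ReflTransGen.refl⟩
    -- there is a site disagreeing with its representative
    have ha : ∃ a, η a ≠ η (rep Q a) := by
      by_contra hc
      push_neg at hc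
      refine hcons fun i j hij => ?_
      rw [hc i, rep_eq_of hij, ← hc j]
    obtain ⟨a, hna⟩ := ha
    -- find an adjacent boundary pair on a path from the representative to `a`
    have hpath : Relation.ReflTransGen
        (fun p q => p ≠ q ∧ (Q p q ≠ 0 ∨ Q q p ≠ 0)) (rep Q a) a :=
      sameComp_symm (rep_mem a)
    obtain ⟨u, v, huv, hreachu, hPu, hPv⟩ :=
      boundary (P := fun x => η x = η (rep Q a)) hpath rfl (fun h => hna h)
    -- v is in the same component as a, and is not a representative
    have hscv : SameComp Q (rep Q a) v := hreachu.tail huv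
    have hrepv : rep Q v = rep Q a := by
      have h1 : rep Q (rep Q a) = rep Q v := rep_eq_of hscv
      rw [rep_idem] at h1
      exact h1.symm
    have hva : v ≠ rep Q a := fun h => hPv (by rw [h])
    have hnotrep : ∀ i, rep Q i ≠ v := by
      intro i hiv
      have h1 : rep Q v = v := by rw [← hiv, rep_idem]
      exact hva (by rw [← h1, hrepv])
    -- the voter move: v adopts the opinion of u
    have hQvu : Q v u ≠ 0 := by
      rcases huv.2 with h | h
      · exact Qsymm_ne hrev hpos h
      · exact h
    have hQvu_pos : 0 < Q v u := edge_pos hQ (fun h => huv.1 (h.symm)) hQvu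
    set ξ : Fin n → Bool := Function.update η v (η u) with hξ
    have hξv : ξ v = η u := Function.update_self v (η u) η
    have hξne : ∀ x, x ≠ v → ξ x = η x := fun x hx => Function.update_of_ne hx _ _
    have hηξ : η ≠ ξ := by
      intro h
      apply hPv
      have h1 : η v = ξ v := by rw [h]
      rw [h1, hξv]
      exact hPu
    have hedge : (fun a b => a ≠ b ∧ voterGen Q a b ≠ 0) η ξ :=
      ⟨hηξ, (voterGen_pos hQ (fun h => huv.1 h.symm) hQvu_pos rfl hηξ).ne'⟩
    -- the number of disagreeing sites decreases
    have hfil : (Finset.univ.filter fun i => ξ i ≠ ξ (rep Q i))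
        = (Finset.univ.filter fun i => η i ≠ η (rep Q i)).erase v := by
      apply Finset.ext
      intro i
      simp only [Finset.mem_erase, Finset.mem_filter, Finset.mem_univ, true_and]
      by_cases hiv : i = v
      · subst hiv
        have h2 : ξ (rep Q i) = η (rep Q i) := hξne _ (hnotrep i)
        constructor
        · intro h3
          exact absurd (by rw [hξv, hPu, ← hrepv] : ξ i = η (rep Q i)) (h2 ▸ h3)
        · intro h3
          exact absurd rfl h3.1
      · have h2 : ξ (rep Q i) = η (rep Q i) := hξne _ (hnotrep i)
        rw [hξne i hiv, h2]
        tauto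
    have hvmem : v ∈ Finset.univ.filter fun i => η i ≠ η (rep Q i) := by
      simp only [Finset.mem_filter, Finset.mem_univ, true_and]
      rw [hrepv]
      exact hPv
    have hcard : (Finset.univ.filter fun i => ξ i ≠ ξ (rep Q i)).card < N := by
      rw [hfil, Finset.card_erase_of_mem hvmem, hN]
      have : 0 < N := by
        rw [← hN]
        exact Finset.card_pos.2 ⟨v, hvmem⟩
      omega
    obtain ⟨ζ, hζcons, hζpath⟩ := ih _ hcard ξ rfl
    exact ⟨ζ, hζcons, Relation.ReflTransGen.head hedge hζpath⟩

/-- One sweep: if two distinct walkers occupy sites of the same component, the coalescing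
system can reach a strictly smaller occupied set. -/
private lemma coal_inner (hQ : IsGenerator Q) (hrev : Reversible Q pi)
    (hpos : ∀ i, 0 < pi i) :
    ∀ {x y : Fin n}, Relation.ReflTransGen
      (fun a b => a ≠ b ∧ (Q a b ≠ 0 ∨ Q b a ≠ 0)) x y →
    ∀ S : Finset (Fin n), x ∈ S → y ∈ S → x ≠ y →
    ∃ S', Relation.ReflTransGen (fun A B => A ≠ B ∧ coalGen Q A B ≠ 0) S S'
      ∧ S'.card < S.card := by
  intro x y h
  induction h using Relation.ReflTransGen.head_induction_on with
  | refl => exact fun S hx hy hxy => absurd rfl hxy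
  | @head a z e h' ih =>
    intro S haS hyS hay
    have hQaz : Q a z ≠ 0 := by
      rcases e.2 with h1 | h1
      · exact h1
      · exact Qsymm_ne hrev hpos h1
    have hQaz_pos : 0 < Q a z := edge_pos hQ e.1 hQaz
    set T := insert z (S.erase a) with hT
    have haT : a ∉ T := by
      simp only [hT, Finset.mem_insert, Finset.mem_erase]
      push_neg
      exact ⟨e.1, fun h2 => absurd rfl h2⟩
    have hST : S ≠ T := fun h2 => haT (h2 ▸ haS)
    have hstep : (fun A B => A ≠ B ∧ coalGen Q A B ≠ 0) S T :=
      ⟨hST, (coalGen_pos hQ haS e.1 hQaz_pos rfl hST).ne'⟩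
    by_cases hz : z ∈ S.erase a
    · refine ⟨T, Relation.ReflTransGen.single hstep, ?_⟩
      have h2 : T = S.erase a := Finset.insert_eq_self.2 hz
      rw [h2, Finset.card_erase_of_mem haS]
      have : 0 < S.card := Finset.card_pos.2 ⟨a, haS⟩
      omega
    · have hcardT : T.card = S.card := by
        rw [hT, Finset.card_insert_of_notMem hz, Finset.card_erase_of_mem haS]
        have : 0 < S.card := Finset.card_pos.2 ⟨a, haS⟩
        omega
      have hzy : z ≠ y := by
        intro h2
        exact hz (h2 ▸ Finset.mem_erase.2 ⟨(Ne.symm hay), hyS⟩)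
      have hzT : z ∈ T := Finset.mem_insert_self _ _
      have hyT : y ∈ T := Finset.mem_insert_of_mem (Finset.mem_erase.2 ⟨Ne.symm hay, hyS⟩)
      obtain ⟨S', hp, hc⟩ := ih T hzT hyT hzy
      refine ⟨S', Relation.ReflTransGen.head hstep hp, ?_⟩
      omega

/-- From any occupied set, the coalescing system can reach a fully coalesced set. -/
private lemma coal_reach (hQ : IsGenerator Q) (hrev : Reversible Q pi)
    (hpos : ∀ i, 0 < pi i) (S : Finset (Fin n)) :
    ∃ T ∈ CoalescedSet Q,
      Relation.ReflTransGen (fun A B => A ≠ B ∧ coalGen Q A B ≠ 0) S T := by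
  suffices H : ∀ (k : ℕ) (S : Finset (Fin n)), S.card ≤ k →
      ∃ T ∈ CoalescedSet Q,
        Relation.ReflTransGen (fun A B => A ≠ B ∧ coalGen Q A B ≠ 0) S T by
    exact H S.card S le_rfl
  intro k
  induction k with
  | zero =>
    intro S hS
    have hSempty : S = ∅ := Finset.card_eq_zero.1 (Nat.le_zero.1 hS)
    refine ⟨S, ?_, Relation.ReflTransGen.refl⟩
    intro x hx
    rw [hSempty] at hx
    exact absurd hx (Finset.notMem_empty x)
  | succ k ihk =>
    intro S hS
    by_cases hc : S ∈ CoalescedSet Q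
    · exact ⟨S, hc, Relation.ReflTransGen.refl⟩
    · have hex : ∃ x ∈ S, ∃ y ∈ S, SameComp Q x y ∧ x ≠ y := by
        by_contra hcc
        push_neg at hcc
        exact hc fun x hx y hy hxy => hcc x hx y hy hxy
      obtain ⟨x, hx, y, hy, hsc, hxy⟩ := hex
      obtain ⟨S', hp, hcard⟩ := coal_inner hQ hrev hpos hsc S hx hy hxy
      obtain ⟨T, hT, hp2⟩ := ihk S' (by omega)
      exact ⟨T, hT, hp.trans hp2⟩

end Reach
section Main

/-- The main inequalities, in the non-degenerate case. -/
private lemma main_ineq {n : ℕ} {Q : Matrix (Fin n) (Fin n) ℝ} {pi : Fin n → ℝ}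
    (hQ : IsGenerator Q) (hrev : Reversible Q pi) (hpos : ∀ i, 0 < pi i)
    (hndeg : (Finset.univ : Finset (Fin n)) ∉ CoalescedSet Q)
    (h : (Fin n → Bool) → ℝ) (hh : IsHitting (voterGen Q) (ConsensusSet Q) h)
    (g : Finset (Fin n) → ℝ) (hg : IsHitting (coalGen Q) (CoalescedSet Q) g)
    (u : ℝ) (hu0 : 0 < u) (hu1 : u < 1) :
    (∑ η, bernWeight u η * h η) ≤ g Finset.univ ∧
      2 * u * (1 - u) * g Finset.univ ≤ ∑ η, bernWeight u η * h η := by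
  classical
  obtain ⟨hh_nonneg, hh_zero, hh_eq, -⟩ := hh
  obtain ⟨hg_nonneg, hg_zero, hg_eq, -⟩ := hg
  set p : Finset (Fin n) → Prop := fun S => S ∉ CoalescedSet Q with hp
  have hoffc : ∀ A B, A ≠ B → 0 ≤ coalGen Q A B := fun A B hAB => coal_offdiag hQ hAB
  have hrowc := coal_rowsum Q
  have reach := coal_reach hQ hrev hpos (Q := Q) (pi := pi)
  -- transfer of the minimum principle to the subtype of non-coalesced sets
  have ext_nn : ∀ w : Subtype p → ℝ,
      (∀ s : Subtype p, ∑ t : Subtype p, coalGen Q s.1 t.1 * w t ≤ 0) →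
      ∀ s, 0 ≤ w s := by
    intro w hsup s
    set wt : Finset (Fin n) → ℝ := fun S => if hS : p S then w ⟨S, hS⟩ else 0 with hwt
    have hww : ∀ a : Subtype p, wt a.1 = w a := fun a => dif_pos a.2
    have h0 : ∀ S, ¬ p S → wt S = 0 := fun S hS => dif_neg hS
    have hsup' : ∀ S, S ∉ CoalescedSet Q → ∑ T, coalGen Q S T * wt T ≤ 0 := by
      intro S hS
      have heq : ∑ T, coalGen Q S T * wt T = ∑ t : Subtype p, coalGen Q S t.1 * wt t.1 :=
        sum_subtype_of_vanish p _ (fun T hT => by rw [h0 T hT, mul_zero])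
      rw [heq, Finset.sum_congr rfl fun t _ => by rw [hww]]
      exact hsup ⟨S, hS⟩
    have hmp := maxPrinciple (coalGen Q) hoffc hrowc (CoalescedSet Q) reach wt
      (fun S hS => (h0 S (not_not_intro hS)).ge) hsup' s.1
    rwa [hww s] at hmp
  -- the restricted generator matrix is invertible
  set M : Matrix (Subtype p) (Subtype p) ℝ := Matrix.of (fun a b => coalGen Q a.1 b.1)
    with hM
  have hMapp : ∀ a b, M a b = coalGen Q a.1 b.1 := fun a b => rfl
  have hker : ∀ v : Subtype p → ℝ, M.mulVec v = 0 → v = 0 := by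
    intro v hv
    have hmv : ∀ s : Subtype p, ∑ t : Subtype p, coalGen Q s.1 t.1 * v t = 0 := by
      intro s
      have h1 : M.mulVec v s = 0 := by rw [hv]; rfl
      simpa [Matrix.mulVec, dotProduct, hMapp] using h1
    funext a
    have h1 := ext_nn v (fun s => (hmv s).le) a
    have h2 := ext_nn (fun t => -v t) (fun s => by
      have h3 : ∑ t : Subtype p, coalGen Q s.1 t.1 * (-v t)
          = -∑ t : Subtype p, coalGen Q s.1 t.1 * v t := by
        rw [← Finset.sum_neg_distrib]
        exact Finset.sum_congr rfl fun t _ => by ring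
      rw [h3, hmv s, neg_zero]) a
    simp only [Left.nonneg_neg_iff] at h2
    exact le_antisymm h2 h1
  have hinj : Function.Injective (Matrix.toLin' M) := by
    rw [← LinearMap.ker_eq_bot, LinearMap.ker_eq_bot']
    intro v hv
    refine hker v ?_
    rwa [Matrix.toLin'_apply] at hv
  have hbij : Function.Bijective (Matrix.toLin' M) :=
    ⟨hinj, LinearMap.injective_iff_surjective.1 hinj⟩
  set e := LinearEquiv.ofBijective (Matrix.toLin' M) hbij with he
  set Minv := LinearMap.toMatrix'
    (e.symm : (Subtype p → ℝ) →ₗ[ℝ] (Subtype p → ℝ)) with hMinv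
  have hMMinv : M * Minv = 1 := by
    have hcomp : (Matrix.toLin' M).comp
        (e.symm : (Subtype p → ℝ) →ₗ[ℝ] (Subtype p → ℝ)) = LinearMap.id := by
      apply LinearMap.ext
      intro v
      simp only [LinearMap.comp_apply, LinearMap.id_apply]
      exact e.apply_symm_apply v
    calc M * Minv
        = LinearMap.toMatrix' (Matrix.toLin' M)
          * LinearMap.toMatrix' (e.symm : (Subtype p → ℝ) →ₗ[ℝ] (Subtype p → ℝ)) := by
          rw [LinearMap.toMatrix'_toLin']
      _ = LinearMap.toMatrix' ((Matrix.toLin' M).comp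
          (e.symm : (Subtype p → ℝ) →ₗ[ℝ] (Subtype p → ℝ))) :=
          (LinearMap.toMatrix'_comp _ _).symm
      _ = 1 := by rw [hcomp, LinearMap.toMatrix'_id]
  have hMinvM : Minv * M = 1 := by
    have hcomp : (e.symm : (Subtype p → ℝ) →ₗ[ℝ] (Subtype p → ℝ)).comp
        (Matrix.toLin' M) = LinearMap.id := by
      apply LinearMap.ext
      intro v
      simp only [LinearMap.comp_apply, LinearMap.id_apply]
      exact e.symm_apply_apply v
    calc Minv * M
        = LinearMap.toMatrix' (e.symm : (Subtype p → ℝ) →ₗ[ℝ] (Subtype p → ℝ))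
          * LinearMap.toMatrix' (Matrix.toLin' M) := by
          rw [LinearMap.toMatrix'_toLin']
      _ = LinearMap.toMatrix' ((e.symm : (Subtype p → ℝ) →ₗ[ℝ] (Subtype p → ℝ)).comp
          (Matrix.toLin' M)) := (LinearMap.toMatrix'_comp _ _).symm
      _ = 1 := by rw [hcomp, LinearMap.toMatrix'_id]
  -- the occupation measure of the coalescing system started from the full set
  set u₀ : Subtype p := ⟨Finset.univ, hndeg⟩ with hu₀
  set ν : Subtype p → ℝ := fun a => -(Minv u₀ a) with hν
  have hνM : ∀ b : Subtype p, ∑ a, ν a * coalGen Q a.1 b.1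
      = -(if u₀ = b then 1 else 0) := by
    intro b
    have h1 : (Minv * M) u₀ b = if u₀ = b then 1 else 0 := by
      rw [hMinvM, Matrix.one_apply]
    rw [← h1, Matrix.mul_apply, ← Finset.sum_neg_distrib]
    refine Finset.sum_congr rfl fun a _ => ?_
    rw [hν, hMapp]
    ring
  have hν0 : ∀ a, 0 ≤ ν a := by
    intro a
    have hcol : ∀ s : Subtype p,
        ∑ t : Subtype p, coalGen Q s.1 t.1 * (fun t => -(Minv t a)) t ≤ 0 := by
      intro s
      have h1 : (M * Minv) s a = if s = a then 1 else 0 := by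
        rw [hMMinv, Matrix.one_apply]
      have h2 : ∑ t : Subtype p, coalGen Q s.1 t.1 * (-(Minv t a))
          = -((M * Minv) s a) := by
        rw [Matrix.mul_apply, ← Finset.sum_neg_distrib]
        refine Finset.sum_congr rfl fun t _ => ?_
        rw [hMapp]
        ring
      rw [h2, h1]
      split_ifs <;> norm_num
    have h3 := ext_nn _ hcol u₀
    simpa [hν] using h3
  -- the associated signed measure on all occupied sets
  set c : Finset (Fin n) → ℝ := fun T => ∑ a : Subtype p, ν a * coalGen Q a.1 T with hc
  have hc_total : ∑ T, c T = 0 := by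
    rw [hc, Finset.sum_comm]
    refine Finset.sum_eq_zero fun a _ => ?_
    rw [← Finset.mul_sum, coal_rowsum, mul_zero]
  have hc_pair : ∀ z : Finset (Fin n) → ℝ, (∀ T ∈ CoalescedSet Q, z T = 0) →
      ∑ T, c T * z T = -(z Finset.univ) := by
    intro z hz
    have hvan : ∀ T, ¬ p T → c T * z T = 0 := by
      intro T hT
      rw [hz T (not_not.1 hT), mul_zero]
    rw [sum_subtype_of_vanish p _ hvan]
    have hterm : ∀ b : Subtype p, c b.1 * z b.1
        = -(if u₀ = b then z b.1 else 0) := by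
      intro b
      rw [hc]
      simp only []
      rw [hνM b]
      split_ifs <;> ring
    rw [Finset.sum_congr rfl fun b _ => hterm b, Finset.sum_neg_distrib,
      Finset.sum_ite_eq, if_pos (Finset.mem_univ u₀)]
  have s3gen : ∀ z : Finset (Fin n) → ℝ,
      ∑ a : Subtype p, ν a * (-(∑ T, coalGen Q a.1 T * z T)) = -(∑ T, c T * z T) := by
    intro z
    simp only [hc, mul_neg, Finset.sum_neg_distrib, Finset.mul_sum, Finset.sum_mul]
    congr 1
    rw [Finset.sum_comm]
    refine Finset.sum_congr rfl fun T _ => Finset.sum_congr rfl fun a _ => by ring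
  -- the candidate expected consensus-time function, through duality
  set φ : (Fin n → Bool) → ℝ := fun η => ∑ a : Subtype p, ν a * (1 - Dm Q η a.1) with hφ
  have hφcons : ∀ η ∈ ConsensusSet Q, φ η = 0 := by
    intro η hη
    simp only [hφ]
    refine Finset.sum_eq_zero fun a _ => ?_
    rw [Dm_cons hη, sub_self, mul_zero]
  have hφeq : ∀ η, η ∉ ConsensusSet Q → ∑ ξ, voterGen Q η ξ * φ ξ = -1 := by
    intro η hη
    have s1 : ∑ ξ, voterGen Q η ξ * φ ξ
        = ∑ a : Subtype p, ν a * (∑ ξ, voterGen Q η ξ * (1 - Dm Q ξ a.1)) := by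
      simp only [hφ, Finset.mul_sum]
      rw [Finset.sum_comm]
      exact Finset.sum_congr rfl fun a _ => Finset.sum_congr rfl fun ξ _ => by ring
    have s2 : ∀ a : Subtype p, ∑ ξ, voterGen Q η ξ * (1 - Dm Q ξ a.1)
        = -(∑ T, coalGen Q a.1 T * Dm Q η T) := by
      intro a
      have hterm : ∀ ξ, voterGen Q η ξ * (1 - Dm Q ξ a.1)
          = voterGen Q η ξ - voterGen Q η ξ * Dm Q ξ a.1 := fun ξ => by ring
      rw [Finset.sum_congr rfl fun ξ _ => hterm ξ, Finset.sum_sub_distrib,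
        voter_rowsum, duality_row, zero_sub]
    have s4 : ∑ T, c T * Dm Q η T = 1 := by
      have e1 : ∀ T, c T * Dm Q η T = c T + c T * (Dm Q η T - 1) := fun T => by ring
      rw [Finset.sum_congr rfl fun T _ => e1 T, Finset.sum_add_distrib, hc_total,
        zero_add, hc_pair (fun T => Dm Q η T - 1) (fun T hT => by show Dm Q η T - 1 = 0; rw [Dm_coal hT, sub_self]),
        Dm_univ_zero hη]
      norm_num
    rw [s1, Finset.sum_congr rfl fun a _ => by rw [s2 a], s3gen (fun T => Dm Q η T), s4]
  -- `h` is the unique solution, hence equals `φ`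
  have huniq : ∀ η, h η = φ η := by
    have hz := harmonicZero (voterGen Q) (fun a b hab => voter_offdiag hQ hab)
      (voter_rowsum Q) (ConsensusSet Q) (voter_reach hQ hrev hpos)
      (fun η => h η - φ η)
      (fun η hη => by show h η - φ η = 0; rw [hh_zero η ⟨Set.mem_univ _, hη⟩, hφcons η hη, sub_zero])
      (fun η hη => by
        show ∑ ξ, voterGen Q η ξ * (h ξ - φ ξ) = 0
        have e1 : ∀ ξ, voterGen Q η ξ * (h ξ - φ ξ)
            = voterGen Q η ξ * h ξ - voterGen Q η ξ * φ ξ := fun ξ => by ring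
        rw [Finset.sum_congr rfl fun ξ _ => e1 ξ, Finset.sum_sub_distrib,
          hh_eq η (Set.mem_univ _) hη, hφeq η hη, sub_self])
    intro η
    have h1 : h η - φ η = 0 := hz η
    linarith [h1]
  -- the expected coalescence time from the full set is the total mass of `ν`
  have hgval : g Finset.univ = ∑ a : Subtype p, ν a := by
    have e1 : ∀ a : Subtype p, ν a = ν a * (-(∑ T, coalGen Q a.1 T * g T)) := by
      intro a
      rw [hg_eq a.1 (Set.mem_univ _) a.2]
      ring
    rw [Finset.sum_congr rfl fun a _ => e1 a, s3gen g,
      hc_pair g (fun T hT => hg_zero T ⟨Set.mem_univ _, hT⟩), neg_neg]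
  -- the expected consensus time from the Bernoulli measure
  set φB : Subtype p → ℝ := fun a => ∑ η, bernWeight u η * Dm Q η a.1 with hφB
  have htsum : ∑ η, bernWeight u η * h η = ∑ a : Subtype p, ν a * (1 - φB a) := by
    rw [Finset.sum_congr rfl fun η _ => by rw [huniq η]]
    simp only [hφ, hφB, Finset.mul_sum]
    rw [Finset.sum_comm]
    refine Finset.sum_congr rfl fun a _ => ?_
    have e1 : ∑ η, bernWeight u η * (ν a * (1 - Dm Q η a.1))
        = ν a * ((∑ η : Fin n → Bool, bernWeight u η) - ∑ η, bernWeight u η * Dm Q η a.1) := by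
      rw [mul_sub, Finset.mul_sum, Finset.mul_sum, ← Finset.sum_sub_distrib]
      exact Finset.sum_congr rfl fun η _ => by ring
    rw [e1, bern_sum]
  have hub : ∀ a : Subtype p, ν a * (1 - φB a) ≤ ν a := by
    intro a
    have h1 : 0 ≤ φB a := Finset.sum_nonneg fun η _ =>
      mul_nonneg (bern_nonneg hu0 hu1 η) (Dm_nonneg η a.1)
    nlinarith [hν0 a]
  have hlb : ∀ a : Subtype p, ν a * (2 * u * (1 - u)) ≤ ν a * (1 - φB a) := by
    intro a
    have hex : ∃ x ∈ a.1, ∃ y ∈ a.1, SameComp Q x y ∧ x ≠ y := by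
      have h2 := a.2
      by_contra hcc
      push_neg at hcc
      exact h2 fun x hx y hy hxy => hcc x hx y hy hxy
    obtain ⟨x, hx, y, hy, hsc, hxy⟩ := hex
    have h1 : φB a ≤ u * u + (1 - u) * (1 - u) := by
      rw [hφB, ← bern_pair u hxy]
      exact Finset.sum_le_sum fun η _ =>
        mul_le_mul_of_nonneg_left (Dm_le_pair hx hy hsc η) (bern_nonneg hu0 hu1 η)
    have h2 : 2 * u * (1 - u) ≤ 1 - φB a := by nlinarith
    exact mul_le_mul_of_nonneg_left h2 (hν0 a)
  constructor
  · rw [htsum, hgval]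
    exact Finset.sum_le_sum fun a _ => hub a
  · rw [htsum, hgval, Finset.mul_sum]
    refine Finset.sum_le_sum fun a _ => ?_
    calc 2 * u * (1 - u) * ν a = ν a * (2 * u * (1 - u)) := by ring
      _ ≤ ν a * (1 - φB a) := hlb a

end Main

/-- **Lemma (duality).** For the `Q`-voter model started from i.i.d. Bernoulli(u)
opinions, `t_cons^{(u)} ≤ t_coal`; if moreover the dual chain is irreducible, then
`t_cons^{(u)} ≥ 2u(1-u) t_coal`. -/
theorem duality_consensus_coalescence {n : ℕ} (Q : Matrix (Fin n) (Fin n) ℝ)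
    (pi : Fin n → ℝ) (hQ : IsGenerator Q) (hrev : Reversible Q pi)
    (hpi : IsStationaryDist Q pi) (u : ℝ) (hu : u ∈ Set.Ioo (0 : ℝ) 1)
    (tcons tcoal : ℝ) (hcons : IsExpConsensusTime Q u tcons)
    (hcoal : IsExpCoalTime Q tcoal) :
    tcons ≤ tcoal ∧ (Irreducible Q → 2 * u * (1 - u) * tcoal ≤ tcons) := by
  obtain ⟨hu0, hu1⟩ := hu
  obtain ⟨h, hh, htcons⟩ := hcons
  obtain ⟨g, hg, htcoal⟩ := hcoal
  have hpipos : ∀ i, 0 < pi i := hpi.1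
  by_cases hdeg : (Finset.univ : Finset (Fin n)) ∈ CoalescedSet Q
  · -- degenerate case: every irreducible component is a singleton
    have hconsall : ∀ η : Fin n → Bool, η ∈ ConsensusSet Q := by
      intro η
      show ∀ i j, SameComp Q i j → η i = η j
      intro i j hij
      rw [hdeg i (Finset.mem_univ i) j (Finset.mem_univ j) hij]
    have hh0 : ∀ η, h η = 0 := fun η => hh.2.1 η ⟨Set.mem_univ _, hconsall η⟩
    have hg0 : g Finset.univ = 0 := hg.2.1 _ ⟨Set.mem_univ _, hdeg⟩
    have h1 : tcons = 0 := by
      rw [htcons]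
      exact Finset.sum_eq_zero fun η _ => by rw [hh0 η, mul_zero]
    have h2 : tcoal = 0 := by rw [htcoal, hg0]
    rw [h1, h2]
    exact ⟨le_rfl, fun _ => by simp⟩
  · have hm := main_ineq hQ hrev hpipos hdeg h hh g hg u hu0 hu1
    rw [htcons, htcoal]
    exact ⟨hm.1, fun _ => hm.2⟩

end VoterIRG
end
end

section
/- For a reversible irreducible continuous-time Markov chain on [n] with stationary distribution π and exit rates q(i) = −Q(i,i), the expected meeting time of two independent copies started from independent π-distributed states satisfies t^π_meet ≥ (1 − ∑_{i∈[n]} π(i)²)² / (4 ∑_{i∈[n]} q(i) π(i)²). -/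
open scoped BigOperators Classical
open MeasureTheory Filter

noncomputable section

namespace VoterIRG

/-- **Proposition (a).** For a reversible irreducible chain with exit rates
`q(i) = -Q(i,i)`, the meeting time from stationarity satisfies
`t_meet^π ≥ (1 - ∑ π(i)²)² / (4 ∑ q(i) π(i)²)`. -/
theorem stationary_meeting_lower_bound {n : ℕ} (hn : 0 < n)
    (Q : Matrix (Fin n) (Fin n) ℝ) (pi : Fin n → ℝ)
    (hQ : IsGenerator Q) (hrev : Reversible Q pi) (hpi : IsStationaryDist Q pi)
    (hirr : Irreducible Q)
    (m : Fin n × Fin n → ℝ) (hm : IsMeetTimeFn Q m) :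
    (1 - ∑ i, pi i ^ 2) ^ 2 / (4 * ∑ i, -Q i i * pi i ^ 2) ≤
      ∑ i, ∑ j, pi i * pi j * m (i, j) := by
  classical
  obtain ⟨hQoff, hQrow⟩ := hQ
  obtain ⟨hpipos, hpisum, hpistat⟩ := hpi
  obtain ⟨hm0', hmA', hmeq', hmin'⟩ := hm
  have hD : ∀ p : Fin n × Fin n, p ∈ {p : Fin n × Fin n | SameComp Q p.1 p.2} :=
    fun p => hirr p.1 p.2
  have hm0 : ∀ p : Fin n × Fin n, 0 ≤ m p := fun p => hm0' p (hD p)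
  have hmA : ∀ p : Fin n × Fin n, p.1 = p.2 → m p = 0 := fun p hp => hmA' p ⟨hD p, hp⟩
  have hmeq : ∀ p : Fin n × Fin n, ¬ p.1 = p.2 →
      ∑ t, prodGen Q p t * m t = -1 := fun p hp => hmeq' p (hD p) hp
  -- swap symmetry of the product generator
  have hGswap : ∀ (x y z w : Fin n), prodGen Q (x, y) (z, w) = prodGen Q (y, x) (w, z) := by
    intro x y z w
    unfold prodGen
    dsimp only
    exact add_comm _ _
  have hswapsum : ∀ p : Fin n × Fin n, ¬ p.1 = p.2 →
      ∑ t : Fin n × Fin n, prodGen Q p t * m (t.2, t.1) = -1 := by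
    intro p hp
    have e : ∑ t : Fin n × Fin n, prodGen Q p t * m (t.2, t.1)
        = ∑ t : Fin n × Fin n, prodGen Q (p.2, p.1) t * m t := by
      refine Fintype.sum_equiv (Equiv.prodComm (Fin n) (Fin n)) _ _ (fun t => ?_)
      show prodGen Q p t * m (t.2, t.1) = prodGen Q (p.2, p.1) (t.2, t.1) * m (t.2, t.1)
      rw [show prodGen Q (p.2, p.1) (t.2, t.1) = prodGen Q (p.1, p.2) (t.1, t.2) from
        hGswap p.2 p.1 t.2 t.1]
    rw [e]
    exact hmeq (p.2, p.1) (fun h => hp h.symm)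
  have hsymle : ∀ p : Fin n × Fin n, m p ≤ m (p.2, p.1) := by
    intro p
    refine hmin' (fun t => m (t.2, t.1)) ?_ ?_ ?_ ?_ p (hD p)
    · exact fun s _ => hm0 _
    · exact fun s hs => hmA (s.2, s.1) hs.2.symm
    · exact fun s _ hs => hswapsum s hs
    · exact fun s hs => absurd (hD s) hs
  have hsym : ∀ x y : Fin n, m (x, y) = m (y, x) := fun x y =>
    le_antisymm (hsymle (x, y)) (hsymle (y, x))
  -- key computation lemmas for the product generator
  have key : ∀ (f : Fin n × Fin n → ℝ) (x y : Fin n),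
      ∑ t : Fin n × Fin n, prodGen Q (x, y) t * f t
        = (∑ a, Q x a * f (a, y)) + ∑ b, Q y b * f (x, b) := by
    intro f x y
    have e : ∀ a b : Fin n, prodGen Q (x, y) (a, b) * f (a, b)
        = (if y = b then Q x a * f (a, b) else 0) + (if x = a then Q y b * f (a, b) else 0) := by
      intro a b
      unfold prodGen
      dsimp only
      split_ifs <;> ring
    calc ∑ t : Fin n × Fin n, prodGen Q (x, y) t * f t
        = ∑ a, ∑ b, prodGen Q (x, y) (a, b) * f (a, b) :=
          Fintype.sum_prod_type (f := fun t : Fin n × Fin n => prodGen Q (x, y) t * f t)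
      _ = ∑ a, ∑ b, ((if y = b then Q x a * f (a, b) else 0)
            + (if x = a then Q y b * f (a, b) else 0)) :=
          Finset.sum_congr rfl fun a _ => Finset.sum_congr rfl fun b _ => e a b
      _ = (∑ a, ∑ b, (if y = b then Q x a * f (a, b) else 0))
            + ∑ a, ∑ b, (if x = a then Q y b * f (a, b) else 0) := by
          rw [← Finset.sum_add_distrib]
          exact Finset.sum_congr rfl fun a _ => by rw [← Finset.sum_add_distrib]
      _ = (∑ a, Q x a * f (a, y)) + ∑ b, Q y b * f (x, b) := by
          congr 1
          · exact Finset.sum_congr rfl fun a _ => by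
              rw [Finset.sum_ite_eq]; simp
          · rw [Finset.sum_comm]
            exact Finset.sum_congr rfl fun b _ => by
              rw [Finset.sum_ite_eq]; simp
  have key2 : ∀ (f : Fin n × Fin n → ℝ) (u v : Fin n),
      ∑ s : Fin n × Fin n, f s * prodGen Q s (u, v)
        = (∑ x, f (x, v) * Q x u) + ∑ y, f (u, y) * Q y v := by
    intro f u v
    have e : ∀ x y : Fin n, f (x, y) * prodGen Q (x, y) (u, v)
        = (if y = v then f (x, y) * Q x u else 0) + (if x = u then f (x, y) * Q y v else 0) := by
      intro x y
      unfold prodGen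
      dsimp only
      split_ifs <;> ring
    calc ∑ s : Fin n × Fin n, f s * prodGen Q s (u, v)
        = ∑ x, ∑ y, f (x, y) * prodGen Q (x, y) (u, v) :=
          Fintype.sum_prod_type (f := fun s : Fin n × Fin n => f s * prodGen Q s (u, v))
      _ = ∑ x, ∑ y, ((if y = v then f (x, y) * Q x u else 0)
            + (if x = u then f (x, y) * Q y v else 0)) :=
          Finset.sum_congr rfl fun x _ => Finset.sum_congr rfl fun y _ => e x y
      _ = (∑ x, ∑ y, (if y = v then f (x, y) * Q x u else 0))
            + ∑ x, ∑ y, (if x = u then f (x, y) * Q y v else 0) := by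
          rw [← Finset.sum_add_distrib]
          exact Finset.sum_congr rfl fun x _ => by rw [← Finset.sum_add_distrib]
      _ = (∑ x, f (x, v) * Q x u) + ∑ y, f (u, y) * Q y v := by
          congr 1
          · exact Finset.sum_congr rfl fun x _ => by
              rw [Finset.sum_ite_eq']; simp
          · rw [Finset.sum_comm]
            exact Finset.sum_congr rfl fun y _ => by
              rw [Finset.sum_ite_eq']; simp
  -- row sums of the product generator vanish
  have hrowG : ∀ p : Fin n × Fin n, ∑ t : Fin n × Fin n, prodGen Q p t = 0 := by
    intro p
    have h1 : ∑ t : Fin n × Fin n, prodGen Q (p.1, p.2) t * (fun _ => (1:ℝ)) t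
        = (∑ a, Q p.1 a * (fun _ => (1:ℝ)) (a, p.2))
          + ∑ b, Q p.2 b * (fun _ => (1:ℝ)) (p.1, b) := key (fun _ => (1:ℝ)) p.1 p.2
    simp only [mul_one] at h1
    calc ∑ t : Fin n × Fin n, prodGen Q p t
        = (∑ a, Q p.1 a) + ∑ b, Q p.2 b := h1
      _ = 0 := by rw [hQrow p.1, hQrow p.2]; norm_num
  -- stationarity of the product measure
  have hstat : ∀ t : Fin n × Fin n,
      ∑ p : Fin n × Fin n, pi p.1 * pi p.2 * prodGen Q p t = 0 := by
    intro t
    have h1 : ∑ p : Fin n × Fin n, (fun s : Fin n × Fin n => pi s.1 * pi s.2) p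
          * prodGen Q p (t.1, t.2)
        = (∑ x, (pi x * pi t.2) * Q x t.1) + ∑ y, (pi t.1 * pi y) * Q y t.2 :=
      key2 (fun s => pi s.1 * pi s.2) t.1 t.2
    have e1 : ∑ x, (pi x * pi t.2) * Q x t.1 = pi t.2 * ∑ x, pi x * Q x t.1 := by
      rw [Finset.mul_sum]
      exact Finset.sum_congr rfl fun x _ => by ring
    have e2 : ∑ y, (pi t.1 * pi y) * Q y t.2 = pi t.1 * ∑ y, pi y * Q y t.2 := by
      rw [Finset.mul_sum]
      exact Finset.sum_congr rfl fun y _ => by ring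
    calc ∑ p : Fin n × Fin n, pi p.1 * pi p.2 * prodGen Q p t
        = (∑ x, (pi x * pi t.2) * Q x t.1) + ∑ y, (pi t.1 * pi y) * Q y t.2 := h1
      _ = 0 := by rw [e1, e2, hpistat t.1, hpistat t.2]; ring
  -- total mass of the product measure
  have hμsum : ∑ p : Fin n × Fin n, pi p.1 * pi p.2 = 1 := by
    calc ∑ p : Fin n × Fin n, pi p.1 * pi p.2
        = ∑ x, ∑ y, pi x * pi y :=
          Fintype.sum_prod_type (f := fun p : Fin n × Fin n => pi p.1 * pi p.2)
      _ = ∑ x, pi x * 1 := Finset.sum_congr rfl fun x _ => by rw [← Finset.mul_sum, hpisum]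
      _ = 1 := by simp only [mul_one]; exact hpisum
  -- diagonal extraction
  have hdiagsum : ∀ F : Fin n × Fin n → ℝ,
      ∑ p : Fin n × Fin n, (if p.1 = p.2 then F p else 0) = ∑ z, F (z, z) := by
    intro F
    calc ∑ p : Fin n × Fin n, (if p.1 = p.2 then F p else 0)
        = ∑ a, ∑ b, (if a = b then F (a, b) else 0) :=
          Fintype.sum_prod_type (f := fun p : Fin n × Fin n => if p.1 = p.2 then F p else 0)
      _ = ∑ z, F (z, z) := Finset.sum_congr rfl fun a _ => by
          rw [Finset.sum_ite_eq]; simp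
  -- the zero identity from stationarity
  have hzero : ∑ p : Fin n × Fin n,
      pi p.1 * pi p.2 * (∑ t : Fin n × Fin n, prodGen Q p t * m t) = 0 := by
    have e : ∀ p : Fin n × Fin n,
        pi p.1 * pi p.2 * (∑ t : Fin n × Fin n, prodGen Q p t * m t)
          = ∑ t : Fin n × Fin n, pi p.1 * pi p.2 * prodGen Q p t * m t := by
      intro p
      rw [Finset.mul_sum]
      exact Finset.sum_congr rfl fun t _ => by ring
    rw [Finset.sum_congr rfl fun p _ => e p, Finset.sum_comm]
    refine Finset.sum_eq_zero fun t _ => ?_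
    rw [← Finset.sum_mul, hstat t, zero_mul]
  -- the diagonal identity: ∑_z π(z)² (Gm)(z,z) = 1 - ∑ π²
  have hsplit : ∀ p : Fin n × Fin n,
      pi p.1 * pi p.2 * (∑ t : Fin n × Fin n, prodGen Q p t * m t)
        = (if p.1 = p.2 then
            pi p.1 * pi p.2 * (∑ t : Fin n × Fin n, prodGen Q p t * m t) + pi p.1 * pi p.2
          else 0) - pi p.1 * pi p.2 := by
    intro p
    by_cases hp : p.1 = p.2
    · rw [if_pos hp]; ring
    · rw [if_neg hp, hmeq p hp]; ring
  have h1α : ∑ z, pi z * pi z * (∑ t : Fin n × Fin n, prodGen Q (z, z) t * m t)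
      = 1 - ∑ i, pi i ^ 2 := by
    have e := Finset.sum_congr rfl fun p (_ : p ∈ (Finset.univ : Finset (Fin n × Fin n))) =>
      hsplit p
    rw [Finset.sum_sub_distrib, hzero, hμsum] at e
    have c2 : ∑ z, (pi z * pi z * (∑ t : Fin n × Fin n, prodGen Q (z, z) t * m t)
        + pi z * pi z) = 1 := by
      have c2' : ∑ p : Fin n × Fin n, (if p.1 = p.2 then
          pi p.1 * pi p.2 * (∑ t : Fin n × Fin n, prodGen Q p t * m t) + pi p.1 * pi p.2
          else 0) = ∑ z, (pi z * pi z * (∑ t : Fin n × Fin n, prodGen Q (z, z) t * m t)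
          + pi z * pi z) :=
        hdiagsum fun p => pi p.1 * pi p.2 * (∑ t : Fin n × Fin n, prodGen Q p t * m t)
          + pi p.1 * pi p.2
      rw [← c2']
      linarith [e]
    rw [Finset.sum_add_distrib] at c2
    have c3 : ∑ z, pi z * pi z = ∑ i, pi i ^ 2 := Finset.sum_congr rfl fun z _ => by ring
    linarith [c2, c3]
  -- 2S = 1 - α
  have h2S : 2 * (∑ z, ∑ a, pi z ^ 2 * (Q z a * m (z, a))) = 1 - ∑ i, pi i ^ 2 := by
    rw [← h1α, Finset.mul_sum]
    refine Finset.sum_congr rfl fun z _ => ?_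
    have e2 : ∑ t : Fin n × Fin n, prodGen Q (z, z) t * m t
        = (∑ a, Q z a * m (a, z)) + ∑ b, Q z b * m (z, b) := key m z z
    have e3 : (∑ a, Q z a * m (a, z)) = ∑ a, Q z a * m (z, a) :=
      Finset.sum_congr rfl fun a _ => by rw [hsym a z]
    rw [e2, e3, ← Finset.mul_sum]
    ring
  -- Dirichlet identity: double sum equals 2M
  have e2' : ∀ p : Fin n × Fin n,
      pi p.1 * pi p.2 * m p * (∑ t : Fin n × Fin n, prodGen Q p t * m t)
        = -(pi p.1 * pi p.2 * m p) := by
    intro p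
    by_cases hp : p.1 = p.2
    · rw [hmA p hp]; ring
    · rw [hmeq p hp]; ring
  have hA1 : ∑ p : Fin n × Fin n, ∑ t : Fin n × Fin n,
      pi p.1 * pi p.2 * prodGen Q p t * m t ^ 2 = 0 := by
    rw [Finset.sum_comm]
    refine Finset.sum_eq_zero fun t _ => ?_
    rw [← Finset.sum_mul, hstat t, zero_mul]
  have hB1 : ∑ p : Fin n × Fin n,
      pi p.1 * pi p.2 * m p ^ 2 * (∑ t : Fin n × Fin n, prodGen Q p t) = 0 :=
    Finset.sum_eq_zero fun p _ => by rw [hrowG p, mul_zero]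
  have hT : ∑ p : Fin n × Fin n, ∑ t : Fin n × Fin n,
      pi p.1 * pi p.2 * prodGen Q p t * (m t - m p) ^ 2
      = 2 * ∑ p : Fin n × Fin n, pi p.1 * pi p.2 * m p := by
    have e : ∀ p : Fin n × Fin n,
        ∑ t : Fin n × Fin n, pi p.1 * pi p.2 * prodGen Q p t * (m t - m p) ^ 2
          = (∑ t : Fin n × Fin n, pi p.1 * pi p.2 * prodGen Q p t * m t ^ 2)
            + pi p.1 * pi p.2 * m p ^ 2 * (∑ t : Fin n × Fin n, prodGen Q p t)
            - 2 * (pi p.1 * pi p.2 * m p * ∑ t : Fin n × Fin n, prodGen Q p t * m t) := by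
      intro p
      rw [Finset.mul_sum (a := pi p.1 * pi p.2 * m p ^ 2),
        Finset.mul_sum (a := pi p.1 * pi p.2 * m p), Finset.mul_sum (a := (2:ℝ)),
        ← Finset.sum_add_distrib, ← Finset.sum_sub_distrib]
      exact Finset.sum_congr rfl fun t _ => by ring
    calc ∑ p : Fin n × Fin n, ∑ t : Fin n × Fin n,
        pi p.1 * pi p.2 * prodGen Q p t * (m t - m p) ^ 2
        = ∑ p : Fin n × Fin n,
            ((∑ t : Fin n × Fin n, pi p.1 * pi p.2 * prodGen Q p t * m t ^ 2)
            + pi p.1 * pi p.2 * m p ^ 2 * (∑ t : Fin n × Fin n, prodGen Q p t)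
            - 2 * (pi p.1 * pi p.2 * m p * ∑ t : Fin n × Fin n, prodGen Q p t * m t)) :=
          Finset.sum_congr rfl fun p _ => e p
      _ = ((∑ p : Fin n × Fin n, ∑ t : Fin n × Fin n,
              pi p.1 * pi p.2 * prodGen Q p t * m t ^ 2)
            + ∑ p : Fin n × Fin n,
              pi p.1 * pi p.2 * m p ^ 2 * (∑ t : Fin n × Fin n, prodGen Q p t))
            - ∑ p : Fin n × Fin n,
              2 * (pi p.1 * pi p.2 * m p * ∑ t : Fin n × Fin n, prodGen Q p t * m t) := by
          rw [Finset.sum_sub_distrib, Finset.sum_add_distrib]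
      _ = (0 + 0) - ∑ p : Fin n × Fin n, 2 * -(pi p.1 * pi p.2 * m p) := by
          rw [hA1, hB1]
          congr 1
          exact Finset.sum_congr rfl fun p _ => by rw [e2' p]
      _ = 2 * ∑ p : Fin n × Fin n, pi p.1 * pi p.2 * m p := by
          rw [← Finset.mul_sum, Finset.sum_neg_distrib]
          ring
  -- nonnegativity of the Dirichlet terms
  have hGnn : ∀ p t : Fin n × Fin n, p ≠ t → 0 ≤ prodGen Q p t := by
    intro p t hpt
    unfold prodGen
    refine add_nonneg ?_ ?_
    · split_ifs with h
      · exact hQoff _ _ fun h1 => hpt (Prod.ext h1 h)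
      · exact le_rfl
    · split_ifs with h
      · exact hQoff _ _ fun h2 => hpt (Prod.ext h h2)
      · exact le_rfl
  have hFnn : ∀ p : Fin n × Fin n,
      0 ≤ ∑ t : Fin n × Fin n, pi p.1 * pi p.2 * prodGen Q p t * (m t - m p) ^ 2 := by
    intro p
    refine Finset.sum_nonneg fun t _ => ?_
    rcases eq_or_ne p t with rfl | hne
    · simp
    · exact mul_nonneg (mul_nonneg (mul_nonneg (hpipos p.1).le (hpipos p.2).le)
        (hGnn p t hne)) (sq_nonneg _)
  -- the diagonal part of the Dirichlet form
  have hdiag : ∀ z : Fin n,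
      ∑ t : Fin n × Fin n, pi z * pi z * prodGen Q (z, z) t * (m t - m (z, z)) ^ 2
        = 2 * ∑ a, pi z ^ 2 * (Q z a * m (z, a) ^ 2) := by
    intro z
    have h0 : m (z, z) = 0 := hmA (z, z) rfl
    have e1 : ∑ t : Fin n × Fin n, pi z * pi z * prodGen Q (z, z) t * (m t - m (z, z)) ^ 2
        = pi z * pi z * ∑ t : Fin n × Fin n, prodGen Q (z, z) t * m t ^ 2 := by
      rw [Finset.mul_sum]
      exact Finset.sum_congr rfl fun t _ => by rw [h0]; ring
    have e2 : ∑ t : Fin n × Fin n, prodGen Q (z, z) t * m t ^ 2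
        = (∑ a, Q z a * m (a, z) ^ 2) + ∑ b, Q z b * m (z, b) ^ 2 :=
      key (fun t => m t ^ 2) z z
    have e3 : (∑ a, Q z a * m (a, z) ^ 2) = ∑ a, Q z a * m (z, a) ^ 2 :=
      Finset.sum_congr rfl fun a _ => by rw [hsym a z]
    rw [e1, e2, e3, ← Finset.mul_sum]
    ring
  -- K ≤ M
  have hKM : (∑ z, ∑ a, pi z ^ 2 * (Q z a * m (z, a) ^ 2))
      ≤ ∑ p : Fin n × Fin n, pi p.1 * pi p.2 * m p := by
    have h1 : ∑ z, ∑ t : Fin n × Fin n,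
        pi z * pi z * prodGen Q (z, z) t * (m t - m (z, z)) ^ 2
        ≤ 2 * ∑ p : Fin n × Fin n, pi p.1 * pi p.2 * m p := by
      rw [← hT]
      calc ∑ z, ∑ t : Fin n × Fin n,
          pi z * pi z * prodGen Q (z, z) t * (m t - m (z, z)) ^ 2
          = ∑ p : Fin n × Fin n, (if p.1 = p.2 then
              ∑ t : Fin n × Fin n, pi p.1 * pi p.2 * prodGen Q p t * (m t - m p) ^ 2
            else 0) :=
            (hdiagsum fun p =>
              ∑ t : Fin n × Fin n, pi p.1 * pi p.2 * prodGen Q p t * (m t - m p) ^ 2).symm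
        _ ≤ ∑ p : Fin n × Fin n, ∑ t : Fin n × Fin n,
              pi p.1 * pi p.2 * prodGen Q p t * (m t - m p) ^ 2 :=
            Finset.sum_le_sum fun p _ => by
              split_ifs with h
              · exact le_rfl
              · exact hFnn p
    have h2 : ∑ z, ∑ t : Fin n × Fin n,
        pi z * pi z * prodGen Q (z, z) t * (m t - m (z, z)) ^ 2
        = 2 * ∑ z, ∑ a, pi z ^ 2 * (Q z a * m (z, a) ^ 2) := by
      rw [Finset.sum_congr rfl fun z (_ : z ∈ (Finset.univ : Finset (Fin n))) => hdiag z,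
        ← Finset.mul_sum]
    linarith [h1, h2]
  -- off-diagonal part of Q
  have hQ' : ∀ x y : Fin n, 0 ≤ (if x = y then 0 else Q x y) := by
    intro x y
    split_ifs with h
    · exact le_rfl
    · exact hQoff x y h
  have hQ'row : ∀ z : Fin n, ∑ a, (if z = a then (0:ℝ) else Q z a) = -Q z z := by
    intro z
    have h2 : ∀ a : Fin n, (if z = a then (0:ℝ) else Q z a)
        = Q z a - (if z = a then Q z a else 0) := by
      intro a
      split_ifs <;> ring
    rw [Finset.sum_congr rfl fun a _ => h2 a, Finset.sum_sub_distrib, hQrow z,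
      Finset.sum_ite_eq]
    simp
  have hβnn : 0 ≤ ∑ i, -Q i i * pi i ^ 2 := by
    refine Finset.sum_nonneg fun i _ => mul_nonneg ?_ (sq_nonneg _)
    rw [← hQ'row i]
    exact Finset.sum_nonneg fun a _ => hQ' i a
  by_cases hb : (∑ i, -Q i i * pi i ^ 2) = 0
  · -- degenerate case: Q = 0 and n = 1
    have hterm : ∀ i : Fin n, -Q i i * pi i ^ 2 = 0 := by
      intro i
      have := (Finset.sum_eq_zero_iff_of_nonneg fun i _ =>
        mul_nonneg (by rw [← hQ'row i]; exact Finset.sum_nonneg fun a _ => hQ' i a)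
          (sq_nonneg (pi i))).1 hb
      exact this i (Finset.mem_univ i)
    have hQdiag : ∀ i : Fin n, Q i i = 0 := by
      intro i
      have h1 : -Q i i * pi i ^ 2 = 0 := hterm i
      have h2 : pi i ^ 2 ≠ 0 := pow_ne_zero 2 (hpipos i).ne'
      have := mul_eq_zero.1 h1
      rcases this with h | h
      · linarith
      · exact absurd h h2
    have hQ0 : ∀ i a : Fin n, Q i a = 0 := by
      intro i a
      rcases eq_or_ne i a with rfl | hne
      · exact hQdiag i
      · have h1 : ∑ a, (if i = a then (0:ℝ) else Q i a) = 0 := by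
          rw [hQ'row i, hQdiag i]; ring
        have h2 := (Finset.sum_eq_zero_iff_of_nonneg fun a _ => hQ' i a).1 h1 a
          (Finset.mem_univ a)
        rw [if_neg hne] at h2
        exact h2
    have hij : ∀ i j : Fin n, i = j := by
      intro i j
      have h := hirr i j
      induction h with
      | refl => rfl
      | tail _ hs ih =>
        rcases hs with ⟨_, h | h⟩
        · exact absurd (hQ0 _ _) h
        · exact absurd (hQ0 _ _) h
    have hn1 : n = 1 := by
      by_contra h
      have h2 : 2 ≤ n := by omega
      have := hij ⟨0, by omega⟩ ⟨1, by omega⟩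
      simp [Fin.ext_iff] at this
    subst hn1
    have hp1 : pi 0 = 1 := by
      have := hpisum
      simpa [Fin.sum_univ_one] using this
    have hm00 : m (0, 0) = 0 := hmA (0, 0) rfl
    simp only [Fin.sum_univ_one, hp1, hm00]
    norm_num
  · -- main case
    have hβpos : 0 < ∑ i, -Q i i * pi i ^ 2 := lt_of_le_of_ne hβnn (Ne.symm hb)
    -- Cauchy-Schwarz
    have hCS := Finset.sum_sq_le_sum_mul_sum_of_sq_eq_mul
      (Finset.univ : Finset (Fin n × Fin n))
      (r := fun p => pi p.1 ^ 2 * (if p.1 = p.2 then 0 else Q p.1 p.2) * m p)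
      (f := fun p => pi p.1 ^ 2 * (if p.1 = p.2 then 0 else Q p.1 p.2))
      (g := fun p => pi p.1 ^ 2 * (if p.1 = p.2 then 0 else Q p.1 p.2) * m p ^ 2)
      (fun p _ => mul_nonneg (sq_nonneg _) (hQ' _ _))
      (fun p _ => mul_nonneg (mul_nonneg (sq_nonneg _) (hQ' _ _)) (sq_nonneg _))
      (fun p _ => by ring)
    have hrS : ∑ p : Fin n × Fin n,
        pi p.1 ^ 2 * (if p.1 = p.2 then 0 else Q p.1 p.2) * m p
        = ∑ z, ∑ a, pi z ^ 2 * (Q z a * m (z, a)) := by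
      calc ∑ p : Fin n × Fin n, pi p.1 ^ 2 * (if p.1 = p.2 then 0 else Q p.1 p.2) * m p
          = ∑ z, ∑ a, pi z ^ 2 * (if z = a then 0 else Q z a) * m (z, a) :=
            Fintype.sum_prod_type (f := fun p : Fin n × Fin n =>
              pi p.1 ^ 2 * (if p.1 = p.2 then 0 else Q p.1 p.2) * m p)
        _ = ∑ z, ∑ a, pi z ^ 2 * (Q z a * m (z, a)) :=
            Finset.sum_congr rfl fun z _ => Finset.sum_congr rfl fun a _ => by
              rcases eq_or_ne z a with rfl | hne
              · rw [if_pos rfl, hmA (z, z) rfl]; ring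
              · rw [if_neg hne]; ring
    have hfβ : ∑ p : Fin n × Fin n, pi p.1 ^ 2 * (if p.1 = p.2 then 0 else Q p.1 p.2)
        = ∑ i, -Q i i * pi i ^ 2 := by
      calc ∑ p : Fin n × Fin n, pi p.1 ^ 2 * (if p.1 = p.2 then 0 else Q p.1 p.2)
          = ∑ z, ∑ a, pi z ^ 2 * (if z = a then 0 else Q z a) :=
            Fintype.sum_prod_type (f := fun p : Fin n × Fin n =>
              pi p.1 ^ 2 * (if p.1 = p.2 then 0 else Q p.1 p.2))
        _ = ∑ z, pi z ^ 2 * -Q z z :=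
            Finset.sum_congr rfl fun z _ => by rw [← Finset.mul_sum, hQ'row z]
        _ = ∑ i, -Q i i * pi i ^ 2 := Finset.sum_congr rfl fun z _ => by ring
    have hgK : ∑ p : Fin n × Fin n,
        pi p.1 ^ 2 * (if p.1 = p.2 then 0 else Q p.1 p.2) * m p ^ 2
        = ∑ z, ∑ a, pi z ^ 2 * (Q z a * m (z, a) ^ 2) := by
      calc ∑ p : Fin n × Fin n,
          pi p.1 ^ 2 * (if p.1 = p.2 then 0 else Q p.1 p.2) * m p ^ 2
          = ∑ z, ∑ a, pi z ^ 2 * (if z = a then 0 else Q z a) * m (z, a) ^ 2 :=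
            Fintype.sum_prod_type (f := fun p : Fin n × Fin n =>
              pi p.1 ^ 2 * (if p.1 = p.2 then 0 else Q p.1 p.2) * m p ^ 2)
        _ = ∑ z, ∑ a, pi z ^ 2 * (Q z a * m (z, a) ^ 2) :=
            Finset.sum_congr rfl fun z _ => Finset.sum_congr rfl fun a _ => by
              rcases eq_or_ne z a with rfl | hne
              · rw [if_pos rfl, hmA (z, z) rfl]; ring
              · rw [if_neg hne]; ring
    rw [hrS, hfβ, hgK] at hCS
    rw [div_le_iff₀ (by linarith : (0:ℝ) < 4 * ∑ i, -Q i i * pi i ^ 2)]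
    rw [show (∑ i, ∑ j, pi i * pi j * m (i, j))
        = ∑ p : Fin n × Fin n, pi p.1 * pi p.2 * m p from
      (Fintype.sum_prod_type (f := fun p : Fin n × Fin n => pi p.1 * pi p.2 * m p)).symm]
    have hmul := mul_le_mul_of_nonneg_left hKM hβnn
    calc (1 - ∑ i, pi i ^ 2) ^ 2
        = 4 * (∑ z, ∑ a, pi z ^ 2 * (Q z a * m (z, a))) ^ 2 := by rw [← h2S]; ring
      _ ≤ 4 * ((∑ i, -Q i i * pi i ^ 2) * ∑ z, ∑ a, pi z ^ 2 * (Q z a * m (z, a) ^ 2)) := by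
          linarith [hCS]
      _ ≤ 4 * ((∑ i, -Q i i * pi i ^ 2) * ∑ p : Fin n × Fin n, pi p.1 * pi p.2 * m p) := by
          linarith [hmul]
      _ = (∑ p : Fin n × Fin n, pi p.1 * pi p.2 * m p) * (4 * ∑ i, -Q i i * pi i ^ 2) := by
          ring

end VoterIRG
end
end

section
/- There exists an absolute constant c_cond > 0 such that for every reversible irreducible continuous-time Markov chain on [n] with stationary distribution π and conductances c(xy) = π(x)Q(x,y), the worst-case expected meeting time of two independent copies satisfies t_meet ≥ c_cond · max_{A ⊂ [n]} π(A)π(A^c) / (∑_{x∈A} ∑_{y∈A^c} c(xy)). -/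
open scoped BigOperators Classical
open MeasureTheory Filter

noncomputable section

namespace VoterIRG

/-- **Proposition (b).** There is an absolute constant `c_cond > 0` such that for every
reversible irreducible chain,
`t_meet ≥ c_cond · max_{A ⊆ [n]} π(A) π(Aᶜ) / (∑_{x∈A} ∑_{y∈Aᶜ} c(xy))`. -/
theorem conductance_meeting_lower_bound :
    ∃ ccond : ℝ, 0 < ccond ∧
      ∀ (n : ℕ) (Q : Matrix (Fin n) (Fin n) ℝ) (pi : Fin n → ℝ),
        IsGenerator Q → Reversible Q pi → IsStationaryDist Q pi → Irreducible Q →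
        ∀ m : Fin n × Fin n → ℝ, IsMeetTimeFn Q m →
          ccond * (⨆ A : Finset (Fin n),
            ((∑ x ∈ A, pi x) * ∑ x ∈ Aᶜ, pi x) / ∑ x ∈ A, ∑ y ∈ Aᶜ, pi x * Q x y) ≤
          ⨆ p : Fin n × Fin n, m p := by
  refine ⟨1, one_pos, ?_⟩
  intro n Q pi hgen hrev hstat hirr m hm
  rw [one_mul]
  have hQrow : ∀ i, ∑ j, Q i j = 0 := hgen.2
  have hQoff : ∀ i j, i ≠ j → 0 ≤ Q i j := hgen.1
  have hpi : ∀ i, 0 < pi i := hstat.1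
  have hm0 : ∀ p : Fin n × Fin n, 0 ≤ m p := fun p => hm.1 p (hirr p.1 p.2)
  have hmd : ∀ p : Fin n × Fin n, p.1 = p.2 → m p = 0 := fun p hp =>
    hm.2.1 p ⟨hirr p.1 p.2, hp⟩
  have hme : ∀ p : Fin n × Fin n, p.1 ≠ p.2 → ∑ t, prodGen Q p t * m t = -1 := fun p hp =>
    hm.2.2.1 p (hirr p.1 p.2) hp
  rcases isEmpty_or_nonempty (Fin n) with he | hne
  · have h1 : ∀ A : Finset (Fin n),
        ((∑ x ∈ A, pi x) * ∑ x ∈ Aᶜ, pi x) / ∑ x ∈ A, ∑ y ∈ Aᶜ, pi x * Q x y = 0 := by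
      intro A
      rw [Finset.eq_empty_of_isEmpty A]
      simp
    calc (⨆ A : Finset (Fin n),
        ((∑ x ∈ A, pi x) * ∑ x ∈ Aᶜ, pi x) / ∑ x ∈ A, ∑ y ∈ Aᶜ, pi x * Q x y)
        = ⨆ _ : Finset (Fin n), (0 : ℝ) := by
          congr 1; funext A; exact h1 A
      _ = 0 := ciSup_const
      _ ≤ ⨆ p : Fin n × Fin n, m p := by rw [Real.iSup_of_isEmpty]
  · set M := ⨆ p : Fin n × Fin n, m p with hMdef
    have hbdd : BddAbove (Set.range m) := Finite.bddAbove_range m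
    have hmM : ∀ p, m p ≤ M := fun p => le_ciSup hbdd p
    have hM0 : 0 ≤ M := by
      obtain ⟨x⟩ := hne
      calc (0 : ℝ) = m (x, x) := (hmd (x, x) rfl).symm
        _ ≤ M := hmM _
    -- row sums of the product generator vanish
    have hrowL : ∀ p : Fin n × Fin n, ∑ t, prodGen Q p t = 0 := by
      intro p
      rw [Fintype.sum_prod_type]
      have h1 : ∀ a, ∑ b, prodGen Q p (a, b)
          = Q p.1 a + (if p.1 = a then ∑ b, Q p.2 b else 0) := by
        intro a
        simp only [prodGen, Finset.sum_add_distrib]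
        congr 1
        · simpa using Finset.sum_ite_eq Finset.univ p.2 (fun _ => Q p.1 a)
        · split_ifs <;> simp
      simp only [h1, Finset.sum_add_distrib, hQrow]
      simp [hQrow]
    -- off-diagonal entries of the product generator are nonnegative
    have hLoff : ∀ p t : Fin n × Fin n, p ≠ t → 0 ≤ prodGen Q p t := by
      intro p t hpt
      unfold prodGen
      have h1 : (0:ℝ) ≤ if p.2 = t.2 then Q p.1 t.1 else 0 := by
        split_ifs with h
        · exact hQoff _ _ (fun h' => hpt (Prod.ext h' h))
        · exact le_refl 0
      have h2 : (0:ℝ) ≤ if p.1 = t.1 then Q p.2 t.2 else 0 := by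
        split_ifs with h
        · exact hQoff _ _ (fun h' => hpt (Prod.ext h h'))
        · exact le_refl 0
      linarith
    -- reversibility of the product generator w.r.t. the product measure
    have hrevL : ∀ p t : Fin n × Fin n,
        (pi p.1 * pi p.2) * prodGen Q p t = (pi t.1 * pi t.2) * prodGen Q t p := by
      intro p t
      simp only [prodGen]
      have e1 : pi p.1 * pi p.2 * (if p.2 = t.2 then Q p.1 t.1 else 0)
          = pi t.1 * pi t.2 * (if t.2 = p.2 then Q t.1 p.1 else 0) := by
        by_cases h : p.2 = t.2
        · rw [if_pos h, if_pos h.symm, h]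
          linear_combination pi t.2 * hrev p.1 t.1
        · rw [if_neg h, if_neg (fun hh => h hh.symm)]
          ring
      have e2 : pi p.1 * pi p.2 * (if p.1 = t.1 then Q p.2 t.2 else 0)
          = pi t.1 * pi t.2 * (if t.1 = p.1 then Q t.2 p.2 else 0) := by
        by_cases h : p.1 = t.1
        · rw [if_pos h, if_pos h.symm, h]
          linear_combination pi t.1 * hrev p.2 t.2
        · rw [if_neg h, if_neg (fun hh => h hh.symm)]
          ring
      rw [mul_add, mul_add, e1, e2]
    apply ciSup_le
    intro A
    set S := ∑ x ∈ A, ∑ y ∈ Aᶜ, pi x * Q x y with hSdef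
    have hS0 : 0 ≤ S := by
      apply Finset.sum_nonneg
      intro x hx
      apply Finset.sum_nonneg
      intro y hy
      have hxy : x ≠ y := fun h => (Finset.mem_compl.1 hy) (h ▸ hx)
      exact mul_nonneg (hpi x).le (hQoff x y hxy)
    -- the cut set in the product space
    set F : Finset (Fin n × Fin n) := A ×ˢ Aᶜ with hFdef
    have hFmem : ∀ p : Fin n × Fin n, p ∈ F ↔ p.1 ∈ A ∧ p.2 ∈ Aᶜ := fun p => Finset.mem_product
    have hFne : ∀ p ∈ F, p.1 ≠ p.2 := by
      intro p hp h
      obtain ⟨h1, h2⟩ := (hFmem p).1 hp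
      exact (Finset.mem_compl.1 h2) (h ▸ h1)
    have key : (∑ x ∈ A, pi x) * (∑ x ∈ Aᶜ, pi x) ≤ M * S := by
      have step1 : (∑ x ∈ A, pi x) * (∑ x ∈ Aᶜ, pi x) = ∑ p ∈ F, pi p.1 * pi p.2 := by
        rw [hFdef, Finset.sum_product (f := fun p : Fin n × Fin n => pi p.1 * pi p.2)]
        exact Finset.sum_mul_sum A Aᶜ pi pi
      have step2 : ∑ p ∈ F, pi p.1 * pi p.2
          = ∑ p ∈ F, ∑ t, (pi p.1 * pi p.2) * (prodGen Q p t * (m p - m t)) := by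
        apply Finset.sum_congr rfl
        intro p hp
        have h1 : ∑ t, prodGen Q p t * m t = -1 := hme p (hFne p hp)
        have h2 : ∑ t, prodGen Q p t * (m p - m t) = 1 := by
          have hexp : ∑ t, prodGen Q p t * (m p - m t)
              = (∑ t, prodGen Q p t) * m p - ∑ t, prodGen Q p t * m t := by
            rw [Finset.sum_mul, ← Finset.sum_sub_distrib]
            apply Finset.sum_congr rfl
            intro t _
            ring
          rw [hexp, hrowL p, h1]
          ring
        rw [← Finset.mul_sum, h2, mul_one]
      have step3 : ∑ p ∈ F, ∑ t, (pi p.1 * pi p.2) * (prodGen Q p t * (m p - m t))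
          = ∑ p ∈ F, ∑ t ∈ F, (pi p.1 * pi p.2) * (prodGen Q p t * (m p - m t))
            + ∑ p ∈ F, ∑ t ∈ Fᶜ, (pi p.1 * pi p.2) * (prodGen Q p t * (m p - m t)) := by
        rw [← Finset.sum_add_distrib]
        apply Finset.sum_congr rfl
        intro p _
        exact (Finset.sum_add_sum_compl F _).symm
      have part1 : ∑ p ∈ F, ∑ t ∈ F, (pi p.1 * pi p.2) * (prodGen Q p t * (m p - m t)) = 0 := by
        have hanti : ∀ p ∈ F, ∀ t ∈ F,
            (pi p.1 * pi p.2) * (prodGen Q p t * (m p - m t))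
            = -((pi t.1 * pi t.2) * (prodGen Q t p * (m t - m p))) := by
          intro p _ t _
          linear_combination (m p - m t) * hrevL p t
        have hcomm : ∑ p ∈ F, ∑ t ∈ F, (pi p.1 * pi p.2) * (prodGen Q p t * (m p - m t))
            = -∑ p ∈ F, ∑ t ∈ F, (pi p.1 * pi p.2) * (prodGen Q p t * (m p - m t)) := by
          conv_lhs => rw [Finset.sum_comm]
          rw [← Finset.sum_neg_distrib]
          apply Finset.sum_congr rfl
          intro p hp
          rw [← Finset.sum_neg_distrib]
          apply Finset.sum_congr rfl
          intro t ht
          exact hanti t ht p hp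
        linarith
      have part2 : ∑ p ∈ F, ∑ t ∈ Fᶜ, (pi p.1 * pi p.2) * (prodGen Q p t * (m p - m t))
          ≤ ∑ p ∈ F, ∑ t ∈ Fᶜ, ((pi p.1 * pi p.2) * prodGen Q p t) * M := by
        apply Finset.sum_le_sum
        intro p hp
        apply Finset.sum_le_sum
        intro t ht
        have hpt : p ≠ t := fun h => (Finset.mem_compl.1 ht) (h ▸ hp)
        have hL : 0 ≤ prodGen Q p t := hLoff p t hpt
        have hmu : 0 ≤ pi p.1 * pi p.2 := mul_nonneg (hpi _).le (hpi _).le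
        have hdm : m p - m t ≤ M := by
          have := hm0 t
          have := hmM p
          linarith
        calc (pi p.1 * pi p.2) * (prodGen Q p t * (m p - m t))
            = ((pi p.1 * pi p.2) * prodGen Q p t) * (m p - m t) := by ring
          _ ≤ ((pi p.1 * pi p.2) * prodGen Q p t) * M :=
            mul_le_mul_of_nonneg_left hdm (mul_nonneg hmu hL)
      -- the mass flowing out of the cut set equals the conductance S
      have hcut : ∀ p ∈ F, ∑ t ∈ Fᶜ, prodGen Q p t
          = ∑ a ∈ Aᶜ, Q p.1 a + ∑ b ∈ A, Q p.2 b := by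
        intro p hp
        obtain ⟨hp1, hp2⟩ := (hFmem p).1 hp
        have hFsum : ∑ t ∈ F, prodGen Q p t = ∑ a ∈ A, Q p.1 a + ∑ b ∈ Aᶜ, Q p.2 b := by
          rw [hFdef, Finset.sum_product (f := fun t : Fin n × Fin n => prodGen Q p t)]
          simp only [prodGen]
          have hterm : ∀ a ∈ A, (∑ b ∈ Aᶜ, ((if p.2 = b then Q p.1 a else 0)
              + (if p.1 = a then Q p.2 b else 0)))
              = Q p.1 a + (if p.1 = a then ∑ b ∈ Aᶜ, Q p.2 b else 0) := by
            intro a _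
            rw [Finset.sum_add_distrib]
            congr 1
            · rw [Finset.sum_ite_eq Aᶜ p.2 (fun _ => Q p.1 a)]
              simp [hp2]
            · split_ifs <;> simp
          rw [Finset.sum_congr rfl hterm, Finset.sum_add_distrib]
          congr 1
          rw [Finset.sum_ite_eq A p.1 (fun _ => ∑ b ∈ Aᶜ, Q p.2 b)]
          simp [hp1]
        have htot : ∑ t ∈ F, prodGen Q p t + ∑ t ∈ Fᶜ, prodGen Q p t = 0 := by
          rw [Finset.sum_add_sum_compl F (prodGen Q p)]
          exact hrowL p
        have hA : ∑ a ∈ A, Q p.1 a + ∑ a ∈ Aᶜ, Q p.1 a = 0 := by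
          rw [Finset.sum_add_sum_compl A (Q p.1)]
          exact hQrow p.1
        have hB : ∑ b ∈ A, Q p.2 b + ∑ b ∈ Aᶜ, Q p.2 b = 0 := by
          rw [Finset.sum_add_sum_compl A (Q p.2)]
          exact hQrow p.2
        linarith [hFsum, htot, hA, hB]
      have part3 : ∑ p ∈ F, ∑ t ∈ Fᶜ, ((pi p.1 * pi p.2) * prodGen Q p t) * M = M * S := by
        have hfac : ∀ p ∈ F, ∑ t ∈ Fᶜ, ((pi p.1 * pi p.2) * prodGen Q p t) * M
            = (pi p.1 * pi p.2) * (∑ a ∈ Aᶜ, Q p.1 a + ∑ b ∈ A, Q p.2 b) * M := by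
          intro p hp
          calc ∑ t ∈ Fᶜ, ((pi p.1 * pi p.2) * prodGen Q p t) * M
              = (∑ t ∈ Fᶜ, prodGen Q p t) * ((pi p.1 * pi p.2) * M) := by
                rw [Finset.sum_mul]
                apply Finset.sum_congr rfl
                intro t _
                ring
            _ = (pi p.1 * pi p.2) * (∑ a ∈ Aᶜ, Q p.1 a + ∑ b ∈ A, Q p.2 b) * M := by
                rw [hcut p hp]
                ring
        rw [Finset.sum_congr rfl hfac]
        rw [hFdef, Finset.sum_product
          (f := fun p : Fin n × Fin n => (pi p.1 * pi p.2) * (∑ a ∈ Aᶜ, Q p.1 a + ∑ b ∈ A, Q p.2 b) * M)]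
        have hone : ∑ x ∈ A, pi x + ∑ x ∈ Aᶜ, pi x = 1 := by
          rw [Finset.sum_add_sum_compl A pi]
          exact hstat.2.1
        have hT1 : ∑ x ∈ A, ∑ y ∈ Aᶜ, pi x * pi y * (∑ a ∈ Aᶜ, Q x a)
            = (∑ y ∈ Aᶜ, pi y) * S := by
          have h1 : ∀ x ∈ A, ∑ y ∈ Aᶜ, pi x * pi y * (∑ a ∈ Aᶜ, Q x a)
              = (∑ y ∈ Aᶜ, pi y) * (∑ a ∈ Aᶜ, pi x * Q x a) := by
            intro x _
            rw [Finset.sum_mul]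
            apply Finset.sum_congr rfl
            intro y _
            rw [← Finset.mul_sum]
            ring
          rw [Finset.sum_congr rfl h1, ← Finset.mul_sum]
        have hT2 : ∑ x ∈ A, ∑ y ∈ Aᶜ, pi x * pi y * (∑ b ∈ A, Q y b)
            = (∑ x ∈ A, pi x) * S := by
          have h1 : ∀ x ∈ A, ∑ y ∈ Aᶜ, pi x * pi y * (∑ b ∈ A, Q y b)
              = pi x * (∑ y ∈ Aᶜ, ∑ b ∈ A, pi y * Q y b) := by
            intro x _
            rw [Finset.mul_sum]
            apply Finset.sum_congr rfl
            intro y _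
            rw [← Finset.mul_sum]
            ring
          have h2 : (∑ y ∈ Aᶜ, ∑ b ∈ A, pi y * Q y b) = S := by
            have h3 : ∀ y ∈ Aᶜ, ∀ b ∈ A, pi y * Q y b = pi b * Q b y := by
              intro y _ b _
              exact hrev y b
            calc ∑ y ∈ Aᶜ, ∑ b ∈ A, pi y * Q y b
                = ∑ y ∈ Aᶜ, ∑ b ∈ A, pi b * Q b y := by
                  apply Finset.sum_congr rfl
                  intro y hy
                  apply Finset.sum_congr rfl
                  intro b hb
                  exact h3 y hy b hb
              _ = ∑ b ∈ A, ∑ y ∈ Aᶜ, pi b * Q b y := Finset.sum_comm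
              _ = S := rfl
          rw [Finset.sum_congr rfl h1, ← Finset.sum_mul, h2]
        calc ∑ x ∈ A, ∑ y ∈ Aᶜ,
              (pi x * pi y) * (∑ a ∈ Aᶜ, Q x a + ∑ b ∈ A, Q y b) * M
            = ∑ x ∈ A, ∑ y ∈ Aᶜ, (M * (pi x * pi y * (∑ a ∈ Aᶜ, Q x a))
                + M * (pi x * pi y * (∑ b ∈ A, Q y b))) := by
              apply Finset.sum_congr rfl
              intro x _
              apply Finset.sum_congr rfl
              intro y _
              ring
          _ = M * (∑ x ∈ A, ∑ y ∈ Aᶜ, pi x * pi y * (∑ a ∈ Aᶜ, Q x a))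
              + M * (∑ x ∈ A, ∑ y ∈ Aᶜ, pi x * pi y * (∑ b ∈ A, Q y b)) := by
              rw [Finset.mul_sum, Finset.mul_sum, ← Finset.sum_add_distrib]
              apply Finset.sum_congr rfl
              intro x _
              rw [Finset.mul_sum, Finset.mul_sum, ← Finset.sum_add_distrib]
          _ = M * ((∑ y ∈ Aᶜ, pi y) * S) + M * ((∑ x ∈ A, pi x) * S) := by
              rw [hT1, hT2]
          _ = M * S := by
              linear_combination M * S * hone
      calc (∑ x ∈ A, pi x) * (∑ x ∈ Aᶜ, pi x)
          = ∑ p ∈ F, ∑ t ∈ F, (pi p.1 * pi p.2) * (prodGen Q p t * (m p - m t))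
            + ∑ p ∈ F, ∑ t ∈ Fᶜ, (pi p.1 * pi p.2) * (prodGen Q p t * (m p - m t)) := by
            rw [step1, step2, step3]
        _ = ∑ p ∈ F, ∑ t ∈ Fᶜ, (pi p.1 * pi p.2) * (prodGen Q p t * (m p - m t)) := by
            rw [part1, zero_add]
        _ ≤ ∑ p ∈ F, ∑ t ∈ Fᶜ, ((pi p.1 * pi p.2) * prodGen Q p t) * M := part2
        _ = M * S := part3
    rcases hS0.eq_or_lt with hSz | hSpos
    · rw [← hSz, div_zero]
      exact hM0
    · rw [div_le_iff₀ hSpos]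
      exact key

end VoterIRG
end
end

section
/- For a reversible irreducible continuous-time Markov chain on [n] with stationary distribution π, for every state i the mixing time from i satisfies t_mix(i) ≤ 2 E_π(T_i), where E_π(T_i) is the expected hitting time of i from a π-distributed start. -/
open scoped BigOperators Classical
open MeasureTheory Filter

noncomputable section

namespace VoterIRG

section
open Matrix

lemma aux_const {n : ℕ} (hn : 0 < n) (Q : Matrix (Fin n) (Fin n) ℝ) (pi : Fin n → ℝ)
    (hQoff : ∀ i j, i ≠ j → 0 ≤ Q i j) (hQrow : ∀ i, ∑ j, Q i j = 0)
    (hrev : ∀ i j, pi i * Q i j = pi j * Q j i) (hpos : ∀ i, 0 < pi i)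
    (hirr : ∀ i j, SameComp Q i j)
    (f : Fin n → ℝ) (hf : ∀ x, ∑ b, Q x b * f b = 0) : ∀ x y, f x = f y := by
  have : ∃ x0 : Fin n, ∀ y, f y ≤ f x0 := by
    obtain ⟨x0, -, hx0⟩ := Finset.exists_max_image Finset.univ f ⟨⟨0, hn⟩, Finset.mem_univ _⟩
    exact ⟨x0, fun y => hx0 y (Finset.mem_univ _)⟩
  obtain ⟨x0, hmax⟩ := this
  have key : ∀ z, f z = f x0 := by
    intro z
    have hcomp := hirr x0 z
    induction hcomp with
    | refl => rfl
    | tail hab hbc ih =>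
      rename_i b c
      -- ih : f b = f x0, edge b → c
      obtain ⟨hne, hor⟩ := hbc
      have hQbc : Q b c ≠ 0 := by
        rcases hor with h1 | h1
        · exact h1
        · intro h2
          apply h1
          have := hrev b c
          rw [h2, mul_zero] at this
          have := this.symm
          exact (mul_eq_zero.1 this).resolve_left (hpos c).ne' 
      have hQbc' : 0 < Q b c := lt_of_le_of_ne (hQoff b c hne) (Ne.symm hQbc)
      -- ∑_j Q b j (f j - f b) = 0 and each term ≤ 0
      have hsum : ∑ j, Q b j * (f j - f b) = 0 := by
        have := hf b
        have h2 := hQrow b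
        calc ∑ j, Q b j * (f j - f b) = (∑ j, Q b j * f j) - (∑ j, Q b j) * f b := by
              rw [Finset.sum_mul, ← Finset.sum_sub_distrib]; exact Finset.sum_congr rfl fun x _ => by ring
          _ = 0 := by rw [this, h2]; ring
      have hterm : ∀ j ∈ Finset.univ, Q b j * (f j - f b) ≤ 0 := by
        intro j _
        rcases eq_or_ne j b with rfl | hj
        · simp
        · have h1 : 0 ≤ Q b j := hQoff b j (Ne.symm hj)
          have h2 : f j - f b ≤ 0 := by
            have := hmax j; rw [ih]; linarith [hmax j, ih ▸ hmax j]
          exact mul_nonpos_of_nonneg_of_nonpos h1 h2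
      have hzero := (Finset.sum_eq_zero_iff_of_nonpos hterm).1 hsum c (Finset.mem_univ _)
      have : f c - f b = 0 := by
        rcases mul_eq_zero.1 hzero with h | h
        · exact absurd h hQbc
        · exact h
      have : f c = f b := by linarith
      rw [this, ih]
  intro x y; rw [key x, key y]

lemma aux_quad {n : ℕ} (Q : Matrix (Fin n) (Fin n) ℝ) (pi : Fin n → ℝ)
    (hQoff : ∀ i j, i ≠ j → 0 ≤ Q i j) (hQrow : ∀ i, ∑ j, Q i j = 0)
    (hpos : ∀ i, 0 < pi i) (hstat : ∀ j, ∑ i, pi i * Q i j = 0)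
    (f : Fin n → ℝ) : ∑ a, ∑ b, pi a * Q a b * f a * f b ≤ 0 := by
  have h1 : 0 ≤ ∑ a, ∑ b, pi a * Q a b * (f a - f b)^2 := by
    apply Finset.sum_nonneg; intro a _
    apply Finset.sum_nonneg; intro b _
    rcases eq_or_ne a b with rfl | hab
    · simp
    · exact mul_nonneg (mul_nonneg (hpos a).le (hQoff a b hab)) (sq_nonneg _)
  have h2 : ∑ a, ∑ b, pi a * Q a b * (f a - f b)^2
      = - 2 * ∑ a, ∑ b, pi a * Q a b * f a * f b := by
    have hA : ∑ a, ∑ b, pi a * Q a b * f a ^ 2 = 0 := by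
      apply Finset.sum_eq_zero; intro a _
      rw [show ∑ b, pi a * Q a b * f a ^2 = (∑ b, Q a b) * (pi a * f a ^2) by
        rw [Finset.sum_mul]; apply Finset.sum_congr rfl; intro b _; ring]
      rw [hQrow a]; ring
    have hB : ∑ a, ∑ b, pi a * Q a b * f b ^ 2 = 0 := by
      rw [Finset.sum_comm]
      apply Finset.sum_eq_zero; intro b _
      rw [show ∑ a, pi a * Q a b * f b ^2 = (∑ a, pi a * Q a b) * f b ^2 by
        rw [Finset.sum_mul]]
      rw [hstat b]; ring
    have expand : ∀ a b : Fin n, pi a * Q a b * (f a - f b)^2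
        = pi a * Q a b * f a ^2 - 2 * (pi a * Q a b * f a * f b) + pi a * Q a b * f b ^2 := by
      intro a b; ring
    simp_rw [expand, Finset.sum_add_distrib, Finset.sum_sub_distrib, ← Finset.mul_sum]
    rw [hA, hB]; ring
  linarith

lemma aux_parseval {n : ℕ} (U : Matrix (Fin n) (Fin n) ℝ)
    (hrow : ∀ a b, ∑ k, U a k * U b k = if a = b then 1 else 0)
    (p q : Fin n → ℝ) :
    ∑ k, (∑ x, U x k * p x) * (∑ y, U y k * q y) = ∑ x, p x * q x := by
  have e : ∀ k, (∑ x, U x k * p x) * (∑ y, U y k * q y)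
      = ∑ x, ∑ y, (p x * q y) * (U x k * U y k) := by
    intro k; rw [Finset.sum_mul_sum]
    apply Finset.sum_congr rfl; intro x _
    apply Finset.sum_congr rfl; intro y _; ring
  calc ∑ k, (∑ x, U x k * p x) * (∑ y, U y k * q y)
      = ∑ k, ∑ x, ∑ y, (p x * q y) * (U x k * U y k) :=
        Finset.sum_congr rfl fun k _ => e k
    _ = ∑ x, ∑ y, (p x * q y) * ∑ k, U x k * U y k := by
        rw [Finset.sum_comm]
        apply Finset.sum_congr rfl; intro x _
        rw [Finset.sum_comm]
        apply Finset.sum_congr rfl; intro y _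
        rw [Finset.mul_sum]
    _ = ∑ x, p x * q x := by
        apply Finset.sum_congr rfl; intro x _
        simp_rw [hrow, mul_ite, mul_one, mul_zero]
        simp

set_option maxHeartbeats 1000000 in
/-- **Lemma.** For a reversible irreducible chain and any state `i`,
`t_mix(i) ≤ 2 𝔼_π(T_i)`. -/
theorem mixing_from_le_hitting {n : ℕ} (hn : 0 < n)
    (Q : Matrix (Fin n) (Fin n) ℝ) (pi : Fin n → ℝ)
    (hQ : IsGenerator Q) (hrev : Reversible Q pi) (hpi : IsStationaryDist Q pi)
    (hirr : Irreducible Q)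
    (h : Fin n → Fin n → ℝ) (hh : IsHitTimeFn Q h) (i : Fin n) :
    mixingTimeFrom Q pi i ≤ 2 * ∑ x, pi x * h x i := by
  classical
  obtain ⟨hQoff, hQrow⟩ := hQ
  obtain ⟨hpos, hsum1, hstat⟩ := hpi
  -- basic square-root weights
  set s : Fin n → ℝ := fun x => Real.sqrt (pi x) with hs_def
  have hs_pos : ∀ x, 0 < s x := fun x => Real.sqrt_pos.2 (hpos x)
  have hs_ne : ∀ x, s x ≠ 0 := fun x => (hs_pos x).ne'
  have hs_sq : ∀ x, s x * s x = pi x := fun x => Real.mul_self_sqrt (hpos x).le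
  have hssum : ∑ x, s x * s x = 1 := by simp_rw [hs_sq]; exact hsum1
  -- the symmetrized matrix
  set M : Matrix (Fin n) (Fin n) ℝ := Matrix.of (fun a b => s a * Q a b / s b) with hM_def
  have hMapp : ∀ a b, M a b = s a * Q a b / s b := fun a b => rfl
  have hMsymm : ∀ a b, M a b = M b a := by
    intro a b
    rw [hMapp, hMapp, div_eq_div_iff (hs_ne b) (hs_ne a)]
    have h1 := hrev a b
    have h2 := hs_sq a; have h3 := hs_sq b
    linear_combination h1 + Q a b * h2 - Q b a * h3
  have hM : M.IsHermitian := by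
    ext a b
    simp only [conjTranspose_apply, star_trivial]
    exact hMsymm b a
  set U : Matrix (Fin n) (Fin n) ℝ := (hM.eigenvectorUnitary : Matrix (Fin n) (Fin n) ℝ) with hU_def
  set μ : Fin n → ℝ := hM.eigenvalues with hμ_def
  have hspec : M = U * diagonal μ * Uᵀ := by
    have := hM.spectral_theorem
    simpa [hU_def, hμ_def, Matrix.star_eq_conjTranspose] using this
  have hUtU : Uᵀ * U = 1 := by
    have := Unitary.coe_star_mul_self hM.eigenvectorUnitary
    simpa [hU_def, Matrix.star_eq_conjTranspose] using this
  have hUUt : U * Uᵀ = 1 := by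
    have := Unitary.coe_mul_star_self hM.eigenvectorUnitary
    simpa [hU_def, Matrix.star_eq_conjTranspose] using this
  have hcol : ∀ k l, ∑ j, U j k * U j l = if k = l then 1 else 0 := by
    intro k l
    have := congrFun (congrFun hUtU k) l
    simpa [Matrix.mul_apply, Matrix.one_apply, transpose_apply] using this
  have hrow : ∀ a b, ∑ k, U a k * U b k = if a = b then 1 else 0 := by
    intro a b
    have := congrFun (congrFun hUUt a) b
    simpa [Matrix.mul_apply, Matrix.one_apply, transpose_apply] using this
  -- eigen-equation (columns)
  have hMU : M * U = U * diagonal μ := by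
    calc M * U = (U * diagonal μ) * (Uᵀ * U) := by rw [← mul_assoc, ← hspec]
      _ = U * diagonal μ := by rw [hUtU, mul_one]
  have heig : ∀ x k, ∑ b, M x b * U b k = μ k * U x k := by
    intro x k
    have h1 : (M * U) x k = ∑ b, M x b * U b k := Matrix.mul_apply
    have h2 : (U * diagonal μ) x k = U x k * μ k := Matrix.mul_diagonal _ _ _ _
    rw [← h1, hMU, h2, mul_comm]
  -- M s = 0
  have hMs : ∀ x, ∑ b, M x b * s b = 0 := by
    intro x
    have hterm : ∀ b, M x b * s b = s x * Q x b := by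
      intro b; rw [hMapp, div_mul_cancel₀ _ (hs_ne b)]
    simp_rw [hterm, ← Finset.mul_sum, hQrow x, mul_zero]
  set γ : Fin n → ℝ := fun k => ∑ x, U x k * s x with hγ_def
  have hF1 : ∀ k, μ k * γ k = 0 := by
    intro k
    have e1 : μ k * γ k = ∑ x, (∑ b, M x b * U b k) * s x := by
      simp_rw [heig]
      rw [hγ_def]; simp only; rw [Finset.mul_sum]
      apply Finset.sum_congr rfl; intro x _; ring
    have e2 : ∑ x, (∑ b, M x b * U b k) * s x = ∑ b, U b k * (∑ x, M b x * s x) := by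
      simp_rw [Finset.sum_mul, Finset.mul_sum]
      rw [Finset.sum_comm]
      apply Finset.sum_congr rfl; intro b _
      apply Finset.sum_congr rfl; intro x _
      rw [hMsymm x b]; ring
    rw [e1, e2]
    simp_rw [hMs, mul_zero, Finset.sum_const_zero]
  -- kernel of M is spanned by s
  have hker : ∀ w : Fin n → ℝ, (∀ x, ∑ b, M x b * w b = 0) → ∃ C, ∀ x, w x = C * s x := by
    intro w hw
    set f : Fin n → ℝ := fun x => w x / s x with hf_def
    have hQf : ∀ x, ∑ b, Q x b * f b = 0 := by
      intro x
      have hterm : ∀ b, Q x b * f b = (M x b * w b) / s x := by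
        intro b; rw [hMapp, hf_def]; field_simp
        rw [div_eq_div_iff (hs_ne b) (mul_ne_zero (hs_ne b) (hs_ne x))]; ring
      simp_rw [hterm, ← Finset.sum_div, hw x, zero_div]
    have hconst := aux_const hn Q pi hQoff hQrow hrev hpos hirr f hQf
    refine ⟨f ⟨0, hn⟩, fun x => ?_⟩
    rw [← hconst x ⟨0, hn⟩, hf_def]
    simp only
    rw [div_mul_cancel₀ _ (hs_ne x)]
  have hcolker : ∀ k, μ k = 0 → (∀ x, U x k = γ k * s x) ∧ γ k ≠ 0 := by
    intro k hk
    obtain ⟨C, hC⟩ := hker (fun x => U x k) (by intro x; rw [heig x k, hk, zero_mul])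
    have hγC : γ k = C := by
      rw [hγ_def]; simp only
      calc ∑ x, U x k * s x = ∑ x, C * (s x * s x) := by
            apply Finset.sum_congr rfl; intro x _; rw [hC x]; ring
        _ = C := by rw [← Finset.mul_sum, hssum, mul_one]
    have hC2 : C * C = 1 := by
      have h1 := hcol k k
      simp only [if_pos rfl] at h1
      calc C * C = ∑ x, U x k * U x k := by
            simp_rw [hC]
            rw [show ∑ x, C * s x * (C * s x) = (C*C) * ∑ x, s x * s x by
              rw [Finset.mul_sum]; apply Finset.sum_congr rfl; intro x _; ring]
            rw [hssum, mul_one]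
        _ = 1 := h1
    have hCne : C ≠ 0 := by intro h0; rw [h0] at hC2; norm_num at hC2
    exact ⟨by intro x; rw [hγC]; exact hC x, by rw [hγC]; exact hCne⟩
  have hF2 : ∀ k l, k ≠ l → γ k * γ l = 0 := by
    intro k l hkl
    by_contra hne
    obtain ⟨hk, hl⟩ := mul_ne_zero_iff.1 hne
    have hμk : μ k = 0 := by
      by_contra hμ; exact hk (by
        have := hF1 k; exact (mul_eq_zero.1 this).resolve_left hμ)
    have hμl : μ l = 0 := by
      by_contra hμ; exact hl (by
        have := hF1 l; exact (mul_eq_zero.1 this).resolve_left hμ)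
    have hCk := (hcolker k hμk).1
    have hCl := (hcolker l hμl).1
    have h0 := hcol k l
    rw [if_neg hkl] at h0
    have : ∑ j, U j k * U j l = γ k * γ l := by
      calc ∑ j, U j k * U j l = ∑ j, (γ k * γ l) * (s j * s j) := by
            apply Finset.sum_congr rfl; intro j _; rw [hCk j, hCl j]; ring
        _ = γ k * γ l := by rw [← Finset.mul_sum, hssum, mul_one]
    rw [this] at h0
    exact hne h0
  have hF7 : ∀ k, μ k = 0 → γ k ≠ 0 := fun k hk => (hcolker k hk).2
  have hF6 : ∀ k, γ k ≠ 0 → γ k ^ 2 = 1 := by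
    intro k hk
    have hγsum : ∑ l, γ l * γ l = 1 := by
      have e : ∀ l, γ l * γ l = ∑ x, ∑ y, (s x * s y) * (U x l * U y l) := by
        intro l
        rw [hγ_def]; simp only
        rw [Finset.sum_mul_sum]
        apply Finset.sum_congr rfl; intro x _
        apply Finset.sum_congr rfl; intro y _; ring
      calc ∑ l, γ l * γ l = ∑ l, ∑ x, ∑ y, (s x * s y) * (U x l * U y l) :=
            Finset.sum_congr rfl (fun l _ => e l)
        _ = ∑ x, ∑ y, (s x * s y) * ∑ l, U x l * U y l := by
            rw [Finset.sum_comm]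
            apply Finset.sum_congr rfl; intro x _
            rw [Finset.sum_comm]
            apply Finset.sum_congr rfl; intro y _
            rw [Finset.mul_sum]
        _ = ∑ x, s x * s x := by
            apply Finset.sum_congr rfl; intro x _
            simp_rw [hrow, mul_ite, mul_one, mul_zero]
            simp
        _ = 1 := hssum
    have hzero : ∀ l, l ≠ k → γ l = 0 := by
      intro l hl
      exact (mul_eq_zero.1 (hF2 l k hl)).resolve_right hk
    have e2 : ∑ l, γ l * γ l = γ k * γ k :=
      Finset.sum_eq_single_of_mem k (Finset.mem_univ _)
        (fun l _ hl => by rw [hzero l hl, zero_mul])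
    rw [sq, ← e2, hγsum]
  have hF4 : ∀ k, μ k ≤ 0 := by
    intro k
    set f : Fin n → ℝ := fun b => U b k / s b with hf_def
    have hU : ∀ b, U b k = f b * s b := by
      intro b; rw [hf_def]; simp only; rw [div_mul_cancel₀ _ (hs_ne b)]
    have h1 := hcol k k; rw [if_pos rfl] at h1
    have e1 : μ k = ∑ x, U x k * (μ k * U x k) := by
      calc μ k = μ k * ∑ x, U x k * U x k := by rw [h1, mul_one]
        _ = ∑ x, U x k * (μ k * U x k) := by
            rw [Finset.mul_sum]; apply Finset.sum_congr rfl; intro x _; ring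
    have e2 : ∀ x, U x k * (μ k * U x k) = ∑ b, pi x * Q x b * f x * f b := by
      intro x
      rw [← heig x k, Finset.mul_sum]
      apply Finset.sum_congr rfl; intro b _
      rw [hMapp, hU b, hU x, ← hs_sq x]
      have hb : s b * (s b)⁻¹ ^ 2 = (s b)⁻¹ := by
        rw [sq, ← mul_assoc, mul_inv_cancel₀ (hs_ne b), one_mul]
      field_simp
      linear_combination (U x k * s x ^ 2 * (s x)⁻¹ * Q x b * U b k) * hb
    rw [e1]
    calc ∑ x, U x k * (μ k * U x k) = ∑ x, ∑ b, pi x * Q x b * f x * f b :=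
          Finset.sum_congr rfl (fun x _ => e2 x)
      _ ≤ 0 := aux_quad Q pi hQoff hQrow hpos hstat f
  -- diagonalize the semigroup
  set Dh : Matrix (Fin n) (Fin n) ℝ := diagonal s with hDh_def
  set Dinv : Matrix (Fin n) (Fin n) ℝ := diagonal (fun x => (s x)⁻¹) with hDinv_def
  set V : Matrix (Fin n) (Fin n) ℝ := Dinv * U with hV_def
  set W : Matrix (Fin n) (Fin n) ℝ := Uᵀ * Dh with hW_def
  have hDD : Dinv * Dh = 1 := by
    rw [hDinv_def, hDh_def, diagonal_mul_diagonal]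
    rw [show (fun i => (s i)⁻¹ * s i) = fun _ => (1:ℝ) from funext fun i => inv_mul_cancel₀ (hs_ne i)]
    exact Matrix.diagonal_one
  have hDD' : Dh * Dinv = 1 := by
    rw [hDh_def, hDinv_def, diagonal_mul_diagonal]
    rw [show (fun i => s i * (s i)⁻¹) = fun _ => (1:ℝ) from funext fun i => mul_inv_cancel₀ (hs_ne i)]
    exact Matrix.diagonal_one
  have hVW : V * W = 1 := by
    rw [hV_def, hW_def, mul_assoc, ← mul_assoc U, hUUt, one_mul, hDD]
  have hWV : W * V = 1 := by
    rw [hV_def, hW_def, mul_assoc, ← mul_assoc Dh, hDD', one_mul, hUtU]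
  have hVunit : IsUnit V := ⟨⟨V, W, hVW, hWV⟩, rfl⟩
  have hVinv : V⁻¹ = W := Matrix.inv_eq_right_inv hVW
  have hQfact : Q = Dinv * M * Dh := by
    ext a b
    rw [Matrix.mul_diagonal, Matrix.diagonal_mul, hMapp]
    field_simp
    linear_combination (-(Q a b * s b * (s b)⁻¹)) * mul_inv_cancel₀ (hs_ne a)
      + (-(Q a b)) * mul_inv_cancel₀ (hs_ne b)
  have hQdiag : Q = V * diagonal μ * W := by
    rw [hQfact, hspec, hV_def, hW_def]
    simp only [Matrix.mul_assoc]
  have hPform : ∀ t : ℝ, transSemigroup Q t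
      = V * diagonal (fun k => Real.exp (t * μ k)) * W := by
    intro t
    have h1 : t • Q = V * diagonal (fun k => t * μ k) * W := by
      rw [hQdiag]
      rw [show diagonal (fun k => t * μ k) = t • diagonal μ by
        rw [← Matrix.diagonal_smul]; rfl]
      rw [Matrix.mul_smul, Matrix.smul_mul]
    rw [transSemigroup, h1, ← hVinv, Matrix.exp_conj _ _ hVunit, hVinv]
    congr 1
    congr 1
    rw [Matrix.exp_diagonal, Pi.exp_def]
    simp [Real.exp_eq_exp_ℝ]
  have hPe : ∀ (t : ℝ) (j : Fin n), transSemigroup Q t i j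
      = ∑ k, ((s i)⁻¹ * U i k) * Real.exp (t * μ k) * (U j k * s j) := by
    intro t j
    rw [hPform t, Matrix.mul_apply]
    apply Finset.sum_congr rfl; intro k _
    rw [Matrix.mul_diagonal, hV_def, hDinv_def, Matrix.diagonal_mul, hW_def, hDh_def,
      Matrix.mul_diagonal, Matrix.transpose_apply]
  -- reconstruction of s from the eigenbasis
  have hUγ : ∀ x, ∑ k, U x k * γ k = s x := by
    intro x
    have hp := aux_parseval U hrow (fun y => if y = x then 1 else 0) s
    have h1 : ∀ k, (∑ y, U y k * (if y = x then 1 else 0)) = U x k := by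
      intro k
      rw [Finset.sum_eq_single_of_mem x (Finset.mem_univ _)
        (fun y _ hy => by rw [if_neg hy, mul_zero])]
      rw [if_pos rfl, mul_one]
    have h2 : ∑ y, (if y = x then (1:ℝ) else 0) * s y = s x := by
      rw [Finset.sum_eq_single_of_mem x (Finset.mem_univ _)
        (fun y _ hy => by rw [if_neg hy, zero_mul])]
      rw [if_pos rfl, one_mul]
    calc ∑ k, U x k * γ k
        = ∑ k, (∑ y, U y k * (if y = x then 1 else 0)) * (∑ y, U y k * s y) := by
          apply Finset.sum_congr rfl; intro k _; rw [h1 k]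
      _ = ∑ y, (if y = x then (1:ℝ) else 0) * s y := hp
      _ = s x := h2
  -- stationary distribution through the eigenbasis
  have hπe : ∀ j, pi j = ∑ k, ((s i)⁻¹ * U i k) * (γ k * γ k) * (U j k * s j) := by
    intro j
    have hsingle : ∀ k : Fin n, ∑ l, (U i k * γ k) * (U j l * γ l)
        = (U i k * γ k) * (U j k * γ k) := by
      intro k
      apply Finset.sum_eq_single_of_mem k (Finset.mem_univ _)
      intro l _ hl
      have h0 : γ k * γ l = 0 := hF2 k l (Ne.symm hl)
      calc (U i k * γ k) * (U j l * γ l) = (U i k * U j l) * (γ k * γ l) := by ring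
        _ = 0 := by rw [h0, mul_zero]
    have hprod : (∑ k, U i k * γ k) * (∑ l, U j l * γ l)
        = ∑ k, (U i k * γ k) * (U j k * γ k) := by
      rw [Finset.sum_mul_sum]
      exact Finset.sum_congr rfl fun k _ => hsingle k
    have h1 : ∑ k, (U i k * γ k) * (U j k * γ k) = s i * s j := by
      rw [← hprod, hUγ i, hUγ j]
    calc pi j = (s i)⁻¹ * (s i * s j) * s j := by
          rw [← hs_sq j]
          linear_combination (-(s j * s j)) * mul_inv_cancel₀ (hs_ne i)
      _ = (s i)⁻¹ * (∑ k, (U i k * γ k) * (U j k * γ k)) * s j := by rw [h1]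
      _ = ∑ k, ((s i)⁻¹ * U i k) * (γ k * γ k) * (U j k * s j) := by
          rw [Finset.mul_sum, Finset.sum_mul]
          apply Finset.sum_congr rfl; intro k _; ring
  -- the expected hitting time vector
  obtain ⟨hg_nonneg, hg_zero, hg_eq, -⟩ := hh i
  set g : Fin n → ℝ := fun x => h x i with hg_def
  have hDall : ∀ x : Fin n, SameComp Q x i := fun x => hirr x i
  have hgi : g i = 0 := hg_zero i ⟨hDall i, rfl⟩
  have hgeq : ∀ x, x ≠ i → ∑ b, Q x b * g b = -1 := by
    intro x hx
    exact hg_eq x (hDall x) (by simpa using hx)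
  have hgnn : ∀ x, 0 ≤ g x := fun x => hg_nonneg x (hDall x)
  set E : ℝ := ∑ x, pi x * g x with hE_def
  have hE0 : 0 ≤ E := Finset.sum_nonneg fun x _ => mul_nonneg (hpos x).le (hgnn x)
  have hQg : ∀ x, ∑ b, Q x b * g b = -1 + (if x = i then (pi i)⁻¹ else 0) := by
    intro x
    rcases eq_or_ne x i with rfl | hx
    · have hsumQg : ∑ y, pi y * (∑ b, Q y b * g b) = 0 := by
        calc ∑ y, pi y * (∑ b, Q y b * g b)
            = ∑ b, (∑ y, pi y * Q y b) * g b := by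
              simp_rw [Finset.mul_sum, Finset.sum_mul]
              rw [Finset.sum_comm]
              apply Finset.sum_congr rfl; intro b _
              apply Finset.sum_congr rfl; intro y _; ring
          _ = 0 := by simp_rw [hstat, zero_mul, Finset.sum_const_zero]
      have hsplit : ∑ y, pi y * (∑ b, Q y b * g b)
          = pi x * (∑ b, Q x b * g b) + ∑ y ∈ Finset.univ.erase x, pi y * (∑ b, Q y b * g b) :=
        (Finset.add_sum_erase _ _ (Finset.mem_univ x)).symm
      have hrest : ∑ y ∈ Finset.univ.erase x, pi y * (∑ b, Q y b * g b)
          = -(1 - pi x) := by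
        have h1 : ∑ y ∈ Finset.univ.erase x, pi y * (∑ b, Q y b * g b)
            = ∑ y ∈ Finset.univ.erase x, -(pi y) := by
          apply Finset.sum_congr rfl; intro y hy
          rw [hgeq y (Finset.ne_of_mem_erase hy)]; ring
        have h2 : pi x + ∑ y ∈ Finset.univ.erase x, pi y = 1 := by
          rw [Finset.add_sum_erase _ _ (Finset.mem_univ x)]; exact hsum1
        rw [h1, Finset.sum_neg_distrib]
        linarith
      have hkey : pi x * (∑ b, Q x b * g b) = 1 - pi x := by
        rw [hsplit, hrest] at hsumQg
        linarith
      rw [if_pos rfl]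
      linear_combination ((pi x)⁻¹) * hkey
        + (-(∑ b, Q x b * g b) - 1) * mul_inv_cancel₀ (hpos x).ne'
    · rw [hgeq x hx, if_neg hx, add_zero]
  -- spectral coefficients of the hitting-time vector
  set w : Fin n → ℝ := fun x => s x * g x with hw_def
  set bco : Fin n → ℝ := fun k => ∑ x, U x k * w x with hb_def
  set cco : Fin n → ℝ := fun k => (s i)⁻¹ * U i k - γ k with hc_def
  have hwi : w i = 0 := by rw [hw_def]; simp only; rw [hgi, mul_zero]
  have hMw : ∀ x, ∑ y, M x y * w y = s x * (-1 + if x = i then (pi i)⁻¹ else 0) := by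
    intro x
    rw [← hQg x, Finset.mul_sum]
    apply Finset.sum_congr rfl; intro y _
    rw [hMapp, hw_def]; simp only
    field_simp
    linear_combination (s x * Q x y * g y) * mul_inv_cancel₀ (hs_ne y)
  have hμb : ∀ k, μ k * bco k = cco k := by
    intro k
    have hsi : s i * (pi i)⁻¹ = (s i)⁻¹ := by
      rw [← hs_sq i, mul_inv, ← mul_assoc, mul_inv_cancel₀ (hs_ne i), one_mul]
    have e1 : μ k * bco k = ∑ x, U x k * (∑ y, M x y * w y) := by
      have swap : ∑ x, U x k * (∑ y, M x y * w y) = ∑ y, (∑ x, M y x * U x k) * w y := by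
        simp_rw [Finset.mul_sum, Finset.sum_mul]
        rw [Finset.sum_comm]
        apply Finset.sum_congr rfl; intro y _
        apply Finset.sum_congr rfl; intro x _
        rw [hMsymm y x]; ring
      rw [swap]
      simp_rw [heig]
      rw [hb_def]; simp only; rw [Finset.mul_sum]
      apply Finset.sum_congr rfl; intro y _; ring
    have e2 : ∑ x, U x k * (∑ y, M x y * w y) = cco k := by
      simp_rw [hMw]
      calc ∑ x, U x k * (s x * (-1 + if x = i then (pi i)⁻¹ else 0))
          = ∑ x, (-(U x k * s x) + (if x = i then U x k * s x * (pi i)⁻¹ else 0)) := by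
            apply Finset.sum_congr rfl; intro x _
            rcases eq_or_ne x i with rfl | hx
            · rw [if_pos rfl, if_pos rfl]; ring
            · rw [if_neg hx, if_neg hx]; ring
        _ = -γ k + U i k * s i * (pi i)⁻¹ := by
            rw [Finset.sum_add_distrib, Finset.sum_neg_distrib]
            have h3 : ∑ x, (if x = i then U x k * s x * (pi i)⁻¹ else 0)
                = U i k * s i * (pi i)⁻¹ := by
              rw [Finset.sum_eq_single_of_mem i (Finset.mem_univ _)
                (fun y _ hy => by rw [if_neg hy]), if_pos rfl]
            rw [h3]
        _ = cco k := by rw [hc_def]; simp only; rw [mul_assoc, hsi]; ring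
    rw [e1, e2]
  -- expectation through the eigenbasis
  have hEb : E = ∑ k, γ k * bco k := by
    have hp := aux_parseval U hrow s w
    calc E = ∑ x, s x * w x := by
          rw [hE_def]; apply Finset.sum_congr rfl; intro x _
          rw [hw_def]; simp only; rw [← hs_sq x]; ring
      _ = ∑ k, γ k * bco k := hp.symm
  have hbi : ∑ k, U i k * bco k = 0 := by
    have hp := aux_parseval U hrow (fun y => if y = i then 1 else 0) w
    have h1 : ∀ k, (∑ y, U y k * (if y = i then 1 else 0)) = U i k := by
      intro k
      rw [Finset.sum_eq_single_of_mem i (Finset.mem_univ _)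
        (fun y _ hy => by rw [if_neg hy, mul_zero])]
      rw [if_pos rfl, mul_one]
    have h2 : ∑ y, (if y = i then (1:ℝ) else 0) * w y = 0 := by
      rw [Finset.sum_eq_single_of_mem i (Finset.mem_univ _)
        (fun y _ hy => by rw [if_neg hy, zero_mul])]
      rw [if_pos rfl, one_mul, hwi]
    calc ∑ k, U i k * bco k
        = ∑ k, (∑ y, U y k * (if y = i then 1 else 0)) * (∑ y, U y k * w y) := by
          apply Finset.sum_congr rfl; intro k _; rw [h1 k]
      _ = 0 := by rw [hp, h2]
  set aco : Fin n → ℝ := fun k => (s i)⁻¹ * U i k with ha_def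
  have hca : ∀ k, cco k = aco k - γ k := fun k => rfl
  have hai : ∑ k, aco k * bco k = 0 := by
    rw [ha_def]; simp only
    simp_rw [mul_assoc]
    rw [← Finset.mul_sum, hbi, mul_zero]
  have hEc : E = ∑ k, -(cco k * bco k) := by
    calc E = ∑ k, γ k * bco k := hEb
      _ = ∑ k, ((γ k - aco k) * bco k + aco k * bco k) := by
          apply Finset.sum_congr rfl; intro k _; ring
      _ = ∑ k, (γ k - aco k) * bco k + ∑ k, aco k * bco k := Finset.sum_add_distrib
      _ = ∑ k, -(cco k * bco k) := by
          rw [hai, add_zero]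
          apply Finset.sum_congr rfl; intro k _
          rw [hca k]; ring
  have hμne : ∀ k, γ k = 0 → μ k < 0 := by
    intro k hk
    rcases lt_or_eq_of_le (hF4 k) with hμ | hμ
    · exact hμ
    · exact absurd hk (hF7 k hμ)
  have hcz : ∀ k, γ k ≠ 0 → cco k = 0 := by
    intro k hk
    have hμ0 : μ k = 0 := (mul_eq_zero.1 (hF1 k)).resolve_right hk
    rw [← hμb k, hμ0, zero_mul]
  have htm : ∀ k, -(cco k * bco k) = if γ k = 0 then cco k^2 / (-μ k) else 0 := by
    intro k
    by_cases hk : γ k = 0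
    · rw [if_pos hk]
      have hμk := hμne k hk
      have hb' : bco k = cco k / μ k := by
        rw [eq_div_iff hμk.ne, mul_comm, hμb k]
      rw [hb']
      field_simp
    · rw [if_neg hk, hcz k hk]; ring
  have hEsum : E = ∑ k, (if γ k = 0 then cco k^2 / (-μ k) else 0) := by
    rw [hEc]; exact Finset.sum_congr rfl fun k _ => htm k
  have htnn : ∀ k, 0 ≤ (if γ k = 0 then cco k^2 / (-μ k) else 0) := by
    intro k; by_cases hk : γ k = 0
    · rw [if_pos hk]; exact div_nonneg (sq_nonneg _) (by linarith [hμne k hk])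
    · rw [if_neg hk]
  -- deviation formula and Cauchy–Schwarz
  have hdev : ∀ (t : ℝ) (j : Fin n), transSemigroup Q t i j - pi j
      = (∑ k, (aco k * (Real.exp (t * μ k) - γ k * γ k)) * U j k) * s j := by
    intro t j
    rw [hPe t j, hπe j, ← Finset.sum_sub_distrib, Finset.sum_mul]
    apply Finset.sum_congr rfl; intro k _
    rw [ha_def]; ring
  have hrowT : ∀ a b : Fin n, ∑ k, Uᵀ a k * Uᵀ b k = if a = b then 1 else 0 := by
    intro a b
    simp_rw [Matrix.transpose_apply]
    exact hcol a b
  have hL1 : ∀ t : ℝ, (∑ j, |transSemigroup Q t i j - pi j|)^2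
      ≤ ∑ k, (aco k * (Real.exp (t * μ k) - γ k * γ k))^2 := by
    intro t
    set X : Fin n → ℝ := fun k => aco k * (Real.exp (t * μ k) - γ k * γ k) with hX
    have h1 : ∀ j, |transSemigroup Q t i j - pi j| = s j * |∑ k, X k * U j k| := by
      intro j; rw [hdev t j, abs_mul, abs_of_pos (hs_pos j), mul_comm]
    have hpars : ∑ j, (∑ k, X k * U j k)^2 = ∑ k, X k^2 := by
      have hp := aux_parseval Uᵀ hrowT X X
      calc ∑ j, (∑ k, X k * U j k)^2
          = ∑ j, (∑ k, Uᵀ k j * X k) * (∑ l, Uᵀ l j * X l) := by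
            apply Finset.sum_congr rfl; intro j _
            rw [sq]
            congr 1 <;>
              exact Finset.sum_congr rfl fun k _ => by rw [Matrix.transpose_apply]; ring
        _ = ∑ k, X k * X k := hp
        _ = ∑ k, X k^2 := Finset.sum_congr rfl fun k _ => (sq (X k)).symm
    calc (∑ j, |transSemigroup Q t i j - pi j|)^2
        = (∑ j, s j * |∑ k, X k * U j k|)^2 :=
          by rw [Finset.sum_congr rfl fun j _ => h1 j]
      _ ≤ (∑ j, s j^2) * (∑ j, |∑ k, X k * U j k|^2) :=
          Finset.sum_mul_sq_le_sq_mul_sq _ _ _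
      _ = ∑ j, (∑ k, X k * U j k)^2 := by
          rw [show ∑ j, s j^2 = 1 by simp_rw [sq, hs_sq]; exact hsum1, one_mul]
          exact Finset.sum_congr rfl fun j _ => sq_abs _
      _ = ∑ k, X k^2 := hpars
  have hXsq : ∀ (t : ℝ) (k : Fin n), (aco k * (Real.exp (t * μ k) - γ k * γ k))^2
      = if γ k = 0 then cco k^2 * Real.exp (t * μ k)^2 else 0 := by
    intro t k
    by_cases hk : γ k = 0
    · rw [if_pos hk]
      have hac : aco k = cco k := by rw [hca k, hk, sub_zero]
      rw [hk, hac]; ring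
    · rw [if_neg hk]
      have hμ0 : μ k = 0 := (mul_eq_zero.1 (hF1 k)).resolve_right hk
      have hγ1 : γ k * γ k = 1 := by
        have := hF6 k hk; rw [sq] at this; exact this
      rw [hμ0, mul_zero, Real.exp_zero, hγ1]; ring
  have habs : ∀ t : ℝ, 0 ≤ ∑ j, |transSemigroup Q t i j - pi j| :=
    fun t => Finset.sum_nonneg fun j _ => abs_nonneg _
  have hbdd : BddBelow {t : ℝ | 0 ≤ t ∧ ∑ j, |transSemigroup Q t i j - pi j| ≤ 1/2} :=
    ⟨0, fun t ht => ht.1⟩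
  have hgoal : mixingTimeFrom Q pi i ≤ 2 * E := by
    rcases eq_or_lt_of_le hE0 with hE | hE
    · -- E = 0
      have hall := (Finset.sum_eq_zero_iff_of_nonneg (fun k _ => htnn k)).1 (by
        rw [← hEsum, ← hE])
      have hczero : ∀ k, γ k = 0 → cco k = 0 := by
        intro k hk
        have h1 := hall k (Finset.mem_univ k)
        rw [if_pos hk] at h1
        have hμk := hμne k hk
        have h2 : cco k ^2 = 0 := by
          rcases div_eq_zero_iff.1 h1 with h | h
          · exact h
          · exact absurd h (by linarith)
        exact pow_eq_zero_iff two_ne_zero |>.1 h2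
      have hmem : (0:ℝ) ∈ {t : ℝ | 0 ≤ t ∧ ∑ j, |transSemigroup Q t i j - pi j| ≤ 1/2} := by
        refine ⟨le_refl 0, ?_⟩
        have h1 := hL1 0
        have h2 : ∑ k, (aco k * (Real.exp (0 * μ k) - γ k * γ k))^2 = 0 := by
          rw [Finset.sum_congr rfl fun k _ => hXsq 0 k]
          apply Finset.sum_eq_zero; intro k _
          by_cases hk : γ k = 0
          · rw [if_pos hk, hczero k hk]; ring
          · rw [if_neg hk]
        rw [h2] at h1
        nlinarith [habs 0]
      have h0 : mixingTimeFrom Q pi i ≤ 0 := csInf_le hbdd hmem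
      linarith
    · -- E > 0
      have hmem : 2 * E ∈ {t : ℝ | 0 ≤ t ∧ ∑ j, |transSemigroup Q t i j - pi j| ≤ 1/2} := by
        refine ⟨by linarith, ?_⟩
        have hexp : ∀ k, γ k = 0 →
            cco k^2 * Real.exp ((2*E) * μ k)^2 ≤ (cco k^2 / (-μ k)) * (1/(4*E)) := by
          intro k hk
          have hμk := hμne k hk
          have hy : 0 < 4*E*(-μ k) := mul_pos (by linarith) (by linarith)
          have he : Real.exp ((2*E) * μ k)^2 = Real.exp (-(4*E*(-μ k))) := by
            rw [sq, ← Real.exp_add]; ring_nf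
          have hle : Real.exp (-(4*E*(-μ k))) ≤ 1/(4*E*(-μ k)) := by
            rw [Real.exp_neg, one_div]
            exact inv_anti₀ hy (by linarith [Real.add_one_le_exp (4*E*(-μ k))])
          calc cco k^2 * Real.exp ((2*E) * μ k)^2
              ≤ cco k^2 * (1/(4*E*(-μ k))) := by
                rw [he]; exact mul_le_mul_of_nonneg_left hle (sq_nonneg _)
            _ = (cco k^2 / (-μ k)) * (1/(4*E)) := by
                field_simp
        have hsum : ∑ k, (if γ k = 0 then cco k^2 * Real.exp ((2*E) * μ k)^2 else 0)
            ≤ E * (1/(4*E)) := by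
          calc ∑ k, (if γ k = 0 then cco k^2 * Real.exp ((2*E) * μ k)^2 else 0)
              ≤ ∑ k, (if γ k = 0 then cco k^2 / (-μ k) else 0) * (1/(4*E)) := by
                apply Finset.sum_le_sum; intro k _
                by_cases hk : γ k = 0
                · rw [if_pos hk, if_pos hk]; exact hexp k hk
                · rw [if_neg hk, if_neg hk, zero_mul]
            _ = E * (1/(4*E)) := by rw [← Finset.sum_mul, ← hEsum]
        have hq : E * (1/(4*E)) = 1/4 := by field_simp
        have h1 := hL1 (2*E)
        rw [Finset.sum_congr rfl fun k _ => hXsq (2*E) k] at h1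
        have h2 : (∑ j, |transSemigroup Q (2*E) i j - pi j|)^2 ≤ 1/4 := by
          rw [hq] at hsum; linarith
        nlinarith [habs (2*E)]
      exact csInf_le hbdd hmem
  calc mixingTimeFrom Q pi i ≤ 2 * E := hgoal
    _ = 2 * ∑ x, pi x * h x i := rfl

end


end VoterIRG
end
end
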